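/- arXiv:1605.00501 — 10 statements merged into one kernel-verified Lean document; each statement's English description precedes it below -/
import Mathlib

section
/- Let n ≥ 3 and let a, b be coprime integers with a > 0 and b ≠ 0. If the polynomial x^3 + b·x + a^n splits into linear factors over ℚ, then there exist positive integers p, q, r, pairwise coprime, with a = p·q·r and p^n + q^n = r^n. -/
open Polynomial

lemma nat_key (n U V A : ℕ) (hn : 0 < n)
    (hUV : Nat.Coprime U V) (h1 : Nat.Coprime U (U+V)) (h2 : Nat.Coprime V (U+V))
    (hprod : U * V * (U + V) = A ^ n) :
    ∃ p q r : ℕ, U = p ^ n ∧ V = q ^ n ∧ U + V = r ^ n ∧ A = p * q * r := by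
  have cU : IsUnit (gcd U (V * (U+V))) := Nat.isUnit_iff.mpr (hUV.mul_right h1)
  obtain ⟨p, hp⟩ := exists_eq_pow_of_mul_eq_pow cU (by rw [← mul_assoc]; exact hprod)
  have cV : IsUnit (gcd V (U * (U+V))) := Nat.isUnit_iff.mpr (hUV.symm.mul_right h2)
  obtain ⟨q, hq⟩ := exists_eq_pow_of_mul_eq_pow cV
    (by rw [show V * (U * (U+V)) = U * V * (U+V) by ring]; exact hprod)
  have cW : IsUnit (gcd (U+V) (U * V)) := Nat.isUnit_iff.mpr (h1.symm.mul_right h2.symm)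
  obtain ⟨r, hr⟩ := exists_eq_pow_of_mul_eq_pow cW
    (by rw [show (U+V) * (U * V) = U * V * (U+V) by ring]; exact hprod)
  refine ⟨p, q, r, hp, hq, hr, ?_⟩
  have : (p * q * r) ^ n = A ^ n := by
    rw [mul_pow, mul_pow, ← hp, ← hq, ← hr]; exact hprod
  exact (Nat.pow_left_injective hn.ne' this).symm

lemma cop_aux (n : ℕ) (a b : ℤ) (hanb : Int.gcd (a^n) b = 1) (x y z : ℤ)
    (hm : x*y*z = -a^n) (he : x*y + x*z + y*z = b) : Int.gcd x y = 1 := by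
  set d := (Int.gcd x y : ℤ) with hd
  have h1 : d ∣ x := Int.gcd_dvd_left x y
  have h2 : d ∣ y := Int.gcd_dvd_right x y
  have hdan : d ∣ a^n := by
    have : d ∣ -(a^n) := hm ▸ ((h1.mul_right y).mul_right z)
    exact (dvd_neg).mp this
  have hdb : d ∣ b := by
    have : d ∣ x*y + x*z + y*z :=
      dvd_add (dvd_add (h1.mul_right y) (h1.mul_right z)) (h2.mul_right z)
    rwa [he] at this
  have hd1 : d ∣ ((Int.gcd (a^n) b : ℕ) : ℤ) := Int.dvd_coe_gcd hdan hdb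
  rw [hanb, hd] at hd1
  exact Nat.dvd_one.mp (by exact_mod_cast hd1)

lemma int_key (n : ℕ) (hn : 3 ≤ n) (a b : ℤ) (ha : 0 < a) (hab : Int.gcd a b = 1)
    (u v w : ℤ) (hu : 0 < u) (hv : 0 < v)
    (hsum : u + v + w = 0) (he : u*v + u*w + v*w = b) (hm : u*v*w = -a^n) :
    ∃ p q r : ℕ, 0 < p ∧ 0 < q ∧ 0 < r ∧
      Nat.Coprime p q ∧ Nat.Coprime p r ∧ Nat.Coprime q r ∧
      a = (p : ℤ) * q * r ∧ p ^ n + q ^ n = r ^ n := by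
  have hanb : Int.gcd (a ^ n) b = 1 :=
    Int.isCoprime_iff_gcd_eq_one.mp ((Int.isCoprime_iff_gcd_eq_one.mpr hab).pow_left)
  have hw' : w = -(u+v) := by linarith
  have hprod : u * v * (u + v) = a ^ n := by
    rw [hw'] at hm; nlinarith [hm]
  have c1 : Int.gcd u v = 1 := cop_aux n a b hanb u v w hm he
  have c2 : Int.gcd u (u+v) = 1 := by
    have : Int.gcd u w = 1 :=
      cop_aux n a b hanb u w v (by linear_combination hm) (by linear_combination he)
    rw [hw', Int.gcd_neg] at this
    simpa using this
  have c3 : Int.gcd v (u+v) = 1 := by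
    have : Int.gcd v w = 1 :=
      cop_aux n a b hanb v w u (by linear_combination hm) (by linear_combination he)
    rw [hw', Int.gcd_neg] at this
    simpa using this
  obtain ⟨U, hU⟩ := Int.eq_ofNat_of_zero_le hu.le
  obtain ⟨V, hV⟩ := Int.eq_ofNat_of_zero_le hv.le
  obtain ⟨A, hA⟩ := Int.eq_ofNat_of_zero_le ha.le
  have hUV : Nat.Coprime U V := by
    have := c1; rw [hU, hV, Int.gcd_natCast_natCast] at this; exact this
  have h1 : Nat.Coprime U (U+V) := by
    have := c2; rw [hU, hV] at this
    rw [show ((U:ℤ) + V) = ((U+V : ℕ) : ℤ) by push_cast; ring, Int.gcd_natCast_natCast] at this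
    exact this
  have h2 : Nat.Coprime V (U+V) := by
    have := c3; rw [hU, hV] at this
    rw [show ((U:ℤ) + V) = ((U+V : ℕ) : ℤ) by push_cast; ring, Int.gcd_natCast_natCast] at this
    exact this
  have hprodN : U * V * (U + V) = A ^ n := by
    have := hprod; rw [hU, hV, hA] at this; exact_mod_cast this
  obtain ⟨p, q, r, hp, hq, hr, hA'⟩ := nat_key n U V A (by omega) hUV h1 h2 hprodN
  have hU0 : 0 < U := by rw [hU] at hu; exact_mod_cast hu
  have hV0 : 0 < V := by rw [hV] at hv; exact_mod_cast hv
  have hp0 : 0 < p := by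
    rcases Nat.eq_zero_or_pos p with h | h
    · rw [h, zero_pow (by omega)] at hp; omega
    · exact h
  have hq0 : 0 < q := by
    rcases Nat.eq_zero_or_pos q with h | h
    · rw [h, zero_pow (by omega)] at hq; omega
    · exact h
  have hr0 : 0 < r := by
    rcases Nat.eq_zero_or_pos r with h | h
    · rw [h, zero_pow (by omega)] at hr; omega
    · exact h
  have hn0 : 0 < n := by omega
  refine ⟨p, q, r, hp0, hq0, hr0, ?_, ?_, ?_, ?_, ?_⟩
  · have : Nat.Coprime (p^n) (q^n) := by rw [← hp, ← hq]; exact hUV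
    exact (Nat.coprime_pow_left_iff hn0 _ _).mp ((Nat.coprime_pow_right_iff hn0 _ _).mp this)
  · have : Nat.Coprime (p^n) (r^n) := by rw [← hp, ← hr]; exact h1
    exact (Nat.coprime_pow_left_iff hn0 _ _).mp ((Nat.coprime_pow_right_iff hn0 _ _).mp this)
  · have : Nat.Coprime (q^n) (r^n) := by rw [← hq, ← hr]; exact h2
    exact (Nat.coprime_pow_left_iff hn0 _ _).mp ((Nat.coprime_pow_right_iff hn0 _ _).mp this)
  · rw [hA, hA']; push_cast; ring
  · omega

theorem stmt_0 (n : ℕ) (hn : 3 ≤ n) (a b : ℤ) (ha : 0 < a) (hb : b ≠ 0)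
    (hab : Int.gcd a b = 1)
    (hsplit : Polynomial.Splits
      ((X ^ 3 + C (b : ℚ) * X + C ((a : ℚ) ^ n)).map (RingHom.id ℚ))) :
    ∃ p q r : ℕ, 0 < p ∧ 0 < q ∧ 0 < r ∧
      Nat.Coprime p q ∧ Nat.Coprime p r ∧ Nat.Coprime q r ∧
      a = (p : ℤ) * q * r ∧ p ^ n + q ^ n = r ^ n := by
  set P : ℚ[X] := X ^ 3 + C (b : ℚ) * X + C ((a : ℚ) ^ n) with hPdef
  replace hsplit : P.Splits := by rw [Polynomial.map_id] at hsplit; exact hsplit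
  have hmon : P.Monic := by unfold P; monicity!
  have hdeg : P.natDegree = 3 := by unfold P; compute_degree!
  have hroots : P.roots.card = 3 := by
    rw [splits_iff_card_roots] at hsplit; rw [hsplit, hdeg]
  obtain ⟨x, y, z, hxyz⟩ := Multiset.card_eq_three.mp hroots
  have hfac0 : P = (X - C x) * ((X - C y) * (X - C z)) := by
    have := Splits.eq_prod_roots_of_monic hsplit hmon
    rw [hxyz] at this
    simpa using this
  have hexp : (X - C x) * ((X - C y) * (X - C z))
      = X^3 - C (x+y+z) * X^2 + C (x*y+x*z+y*z) * X - C (x*y*z) := by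
    simp only [map_add, map_mul]; ring
  have hfac : P = X^3 - C (x+y+z) * X^2 + C (x*y+x*z+y*z) * X - C (x*y*z) :=
    hfac0.trans hexp
  have e0 := congrArg (eval 0) hfac
  have e1 := congrArg (eval 1) hfac
  have em1 := congrArg (eval (-1)) hfac
  simp [hPdef] at e0 e1 em1
  ring_nf at e0 e1 em1
  have h0 : x*y*z = -((a:ℚ)^n) := by linarith
  have h2 : x + y + z = 0 := by linarith
  have h1 : x*y + x*z + y*z = (b:ℚ) := by linarith
  -- every root is an integer
  have hint : ∀ r : ℚ, r ∈ P.roots → ∃ m : ℤ, (m : ℚ) = r := by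
    intro r hr
    have hr0 : r^3 + (b:ℚ)*r + (a:ℚ)^n = 0 := by
      have := isRoot_of_mem_roots hr
      simpa [hPdef, IsRoot] using this
    have hri : IsIntegral ℤ r := by
      refine ⟨X^3 + C b * X + C (a^n), ?_, ?_⟩
      · monicity!
      · simp only [algebraMap_int_eq, eval₂_add, eval₂_mul, eval₂_pow, eval₂_X, eval₂_C,
          Int.coe_castRingHom]
        push_cast
        linear_combination hr0
    obtain ⟨m, hm⟩ := IsIntegrallyClosed.isIntegral_iff.mp hri
    exact ⟨m, by simpa using hm⟩
  obtain ⟨u, hu⟩ := hint x (by rw [hxyz]; simp)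
  obtain ⟨v, hv⟩ := hint y (by rw [hxyz]; simp)
  obtain ⟨w, hw⟩ := hint z (by rw [hxyz]; simp)
  rw [← hu, ← hv, ← hw] at h0 h1 h2
  have hsum : u + v + w = 0 := by exact_mod_cast h2
  have he : u*v + u*w + v*w = b := by exact_mod_cast h1
  have hm : u*v*w = -a^n := by exact_mod_cast h0
  have hane : (0:ℤ) < a ^ n := pow_pos ha n
  have hu0 : u ≠ 0 := by rintro rfl; simp at hm; omega
  have hv0 : v ≠ 0 := by rintro rfl; simp at hm; omega
  have hw0 : w ≠ 0 := by rintro rfl; simp at hm; omega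
  rcases hu0.lt_or_gt with hu1 | hu1 <;>
  rcases hv0.lt_or_gt with hv1 | hv1 <;>
  rcases hw0.lt_or_gt with hw1 | hw1
  · linarith
  · nlinarith [mul_pos (mul_pos (neg_pos.mpr hu1) (neg_pos.mpr hv1)) hw1]
  · nlinarith [mul_pos (mul_pos (neg_pos.mpr hu1) hv1) (neg_pos.mpr hw1)]
  · exact int_key n hn a b ha hab v w u hv1 hw1 (by linarith)
      (by linear_combination he) (by linear_combination hm)
  · nlinarith [mul_pos (mul_pos hu1 (neg_pos.mpr hv1)) (neg_pos.mpr hw1)]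
  · exact int_key n hn a b ha hab u w v hu1 hw1 (by linarith)
      (by linear_combination he) (by linear_combination hm)
  · exact int_key n hn a b ha hab u v w hu1 hv1 hsum he hm
  · linarith
end

section
/- Let n be a positive integer and suppose p, q, r are pairwise coprime positive integers satisfying p^n + q^n = r^n. Then the polynomial (x - p^n)(x - q^n)(x + r^n) has the form x^3 + b·x + a^n where a = p·q·r, b ≠ 0, and gcd(a, b) = 1. -/
open Polynomial

theorem stmt_1 (n : ℕ) (hn : 1 ≤ n) (p q r : ℕ)
    (hp : 0 < p) (hq : 0 < q) (hr : 0 < r)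
    (hpq : Nat.Coprime p q) (hpr : Nat.Coprime p r) (hqr : Nat.Coprime q r)
    (hfermat : p ^ n + q ^ n = r ^ n) :
    ∃ b : ℤ,
      (X - C ((p : ℤ) ^ n)) * (X - C ((q : ℤ) ^ n)) * (X + C ((r : ℤ) ^ n)) =
        X ^ 3 + C b * X + C (((p : ℤ) * q * r) ^ n) ∧
      b = (p : ℤ) ^ n * q ^ n - (p : ℤ) ^ n * r ^ n - (q : ℤ) ^ n * r ^ n ∧
      b ≠ 0 ∧
      Int.gcd ((p : ℤ) * q * r) b = 1 := by
  have hr' : (r : ℤ) ^ n = (p : ℤ) ^ n + (q : ℤ) ^ n := by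
    exact_mod_cast hfermat.symm
  set b : ℤ := (p : ℤ) ^ n * q ^ n - (p : ℤ) ^ n * r ^ n - (q : ℤ) ^ n * r ^ n with hb
  have hp0 : (0 : ℤ) < (p : ℤ) ^ n := by positivity
  have hq0 : (0 : ℤ) < (q : ℤ) ^ n := by positivity
  refine ⟨b, ?_, rfl, ?_, ?_⟩
  · rw [hb]
    simp only [mul_pow]
    rw [hr']
    simp only [C_add, C_mul, C_sub, C_pow]
    ring
  · have : b = (p : ℤ) ^ n * q ^ n - ((p:ℤ)^n + (q:ℤ)^n)^2 := by
      rw [hb, hr']; ring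
    rw [this]
    have : (p : ℤ) ^ n * q ^ n < ((p:ℤ)^n + (q:ℤ)^n)^2 := by nlinarith
    omega
  · rw [← Int.isCoprime_iff_gcd_eq_one]
    have cpq : IsCoprime (p : ℤ) (q : ℤ) := Int.isCoprime_iff_gcd_eq_one.2 hpq
    have cpr : IsCoprime (p : ℤ) (r : ℤ) := Int.isCoprime_iff_gcd_eq_one.2 hpr
    have cqr : IsCoprime (q : ℤ) (r : ℤ) := Int.isCoprime_iff_gcd_eq_one.2 hqr
    have hbp : b = (p:ℤ) * ((p:ℤ)^(n-1) * (q^n - r^n)) - (q:ℤ)^n * r^n := by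
      rw [hb]
      have : (p:ℤ)^n = (p:ℤ) * (p:ℤ)^(n-1) := by
        rw [← pow_succ']; congr 1; omega
      rw [this]; ring
    have hbq : b = (q:ℤ) * ((q:ℤ)^(n-1) * (p^n - r^n)) - (p:ℤ)^n * r^n := by
      rw [hb]
      have : (q:ℤ)^n = (q:ℤ) * (q:ℤ)^(n-1) := by
        rw [← pow_succ']; congr 1; omega
      rw [this]; ring
    have hbr : b = (r:ℤ) * (-((r:ℤ)^(n-1) * (p^n + q^n))) + (p:ℤ)^n * q^n := by
      rw [hb]
      have : (r:ℤ)^n = (r:ℤ) * (r:ℤ)^(n-1) := by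
        rw [← pow_succ']; congr 1; omega
      rw [this]; ring
    have hcp : IsCoprime (p : ℤ) b := by
      have : IsCoprime (p:ℤ) (-((q:ℤ)^n * r^n)) :=
        ((cpq.pow_right.mul_right cpr.pow_right)).neg_right
      have h2 : IsCoprime (p:ℤ) (-((q:ℤ)^n * r^n) + (p:ℤ) * ((p:ℤ)^(n-1) * (q^n - r^n))) :=
        IsCoprime.add_mul_left_right this _
      rw [hbp]; convert h2 using 1; ring
    have hcq : IsCoprime (q : ℤ) b := by
      have : IsCoprime (q:ℤ) (-((p:ℤ)^n * r^n)) :=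
        ((cpq.symm.pow_right.mul_right cqr.pow_right)).neg_right
      have h2 : IsCoprime (q:ℤ) (-((p:ℤ)^n * r^n) + (q:ℤ) * ((q:ℤ)^(n-1) * (p^n - r^n))) :=
        IsCoprime.add_mul_left_right this _
      rw [hbq]; convert h2 using 1; ring
    have hcr : IsCoprime (r : ℤ) b := by
      have : IsCoprime (r:ℤ) ((p:ℤ)^n * q^n) :=
        (cpr.symm.pow_right.mul_right cqr.symm.pow_right)
      have h2 : IsCoprime (r:ℤ) ((p:ℤ)^n * q^n + (r:ℤ) * (-((r:ℤ)^(n-1) * (p^n + q^n)))) :=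
        IsCoprime.add_mul_left_right this _
      rw [hbr]; convert h2 using 1; ring
    exact (hcp.mul_left hcq).mul_left hcr
end

section
/- Suppose a, b, a', b' are positive integers with gcd(a,b) = gcd(a',b') = 1, a·b = a'·b', and a·b is odd. Then for every n ≥ 1, a^n + b^n ≠ a'^n - b'^n. -/
theorem stmt_3 (a b a' b' : ℕ) (ha : 0 < a) (hb : 0 < b) (ha' : 0 < a') (hb' : 0 < b')
    (hcop : Nat.gcd a b = 1) (hcop' : Nat.gcd a' b' = 1)
    (hprod : a * b = a' * b') (hodd : Odd (a * b)) :
    ∀ n : ℕ, 1 ≤ n → (a : ℤ) ^ n + (b : ℤ) ^ n ≠ (a' : ℤ) ^ n - (b' : ℤ) ^ n := by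
  intro n hn heq
  obtain ⟨hoa, hob⟩ := Nat.odd_mul.mp hodd
  obtain ⟨hoa', hob'⟩ := Nat.odd_mul.mp (hprod ▸ hodd)
  have mem : ∀ m : ℕ, Odd m → (m : ZMod 4) = 1 ∨ (m : ZMod 4) = 3 := by
    intro m hm
    obtain ⟨k, rfl⟩ := hm
    have hk : (k : ZMod 4) = 0 ∨ (k : ZMod 4) = 1 ∨ (k : ZMod 4) = 2 ∨ (k : ZMod 4) = 3 := by
      generalize (k : ZMod 4) = x; revert x; decide
    push_cast
    rcases hk with h | h | h | h <;> rw [h] <;> decide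
  have h4 : ((a : ZMod 4)) ^ n + (b : ZMod 4) ^ n = (a' : ZMod 4) ^ n - (b' : ZMod 4) ^ n := by
    have := congrArg (fun z : ℤ => (z : ZMod 4)) heq
    push_cast at this
    exact this
  have hp4 : (a : ZMod 4) * b = (a' : ZMod 4) * b' := by exact_mod_cast congrArg (Nat.cast : ℕ → ZMod 4) hprod
  have sq : ∀ x : ZMod 4, (x = 1 ∨ x = 3) → x ^ 2 = 1 := by decide
  have ma := mem a hoa
  have mb := mem b hob
  have ma' := mem a' hoa'
  have mb' := mem b' hob'
  rcases Nat.even_or_odd n with ⟨k, rfl⟩ | ⟨k, rfl⟩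
  · have rw1 : ∀ x : ZMod 4, (x = 1 ∨ x = 3) → x ^ (k + k) = 1 := by
      intro x hx
      have : x ^ (k + k) = (x ^ 2) ^ k := by ring
      rw [this, sq x hx, one_pow]
    rw [rw1 _ ma, rw1 _ mb, rw1 _ ma', rw1 _ mb'] at h4
    revert h4; decide
  · have rw1 : ∀ x : ZMod 4, (x = 1 ∨ x = 3) → x ^ (2 * k + 1) = x := by
      intro x hx
      have : x ^ (2 * k + 1) = (x ^ 2) ^ k * x := by ring
      rw [this, sq x hx, one_pow, one_mul]
    rw [rw1 _ ma, rw1 _ mb, rw1 _ ma', rw1 _ mb'] at h4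
    have key : ∀ x y x' y' : ZMod 4, (x = 1 ∨ x = 3) → (y = 1 ∨ y = 3) →
        (x' = 1 ∨ x' = 3) → (y' = 1 ∨ y' = 3) → x * y = x' * y' → x + y = x' - y' → False := by
      decide
    exact key _ _ _ _ ma mb ma' mb' hp4 h4
end

section
/- Assume Fermat's Last Theorem. Then for n ≥ 2, the system of equations X^n + Y^n = X'^n - Y'^n and X·Y = X'·Y', with X, Y coprime and X', Y' coprime, has no solution in positive integers. -/
lemma coprime_pow_split {a b c : ℕ} {k : ℕ} (h : Nat.Coprime a b) (heq : a * b = c ^ k) :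
    ∃ d, a = d ^ k :=
  exists_eq_pow_of_mul_eq_pow (Nat.isUnit_iff.mpr h) heq

/-- helper: if u*v = 4*w^4, u even, v odd, coprime, then u = 4α⁴, v = β⁴ -/
lemma split4 {u v w : ℕ} (hco : Nat.Coprime u v) (h : u * v = 4 * w ^ 4)
    (hu : u % 2 = 0) (hv : v % 2 = 1) :
    ∃ α β, u = 4 * α ^ 4 ∧ v = β ^ 4 := by
  obtain ⟨u1, rfl⟩ : 2 ∣ u := Nat.dvd_of_mod_eq_zero hu
  have h1 : u1 * v = 2 * w ^ 4 := by ring_nf at h ⊢; omega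
  have hu1 : u1 % 2 = 0 := by
    rcases Nat.mod_two_eq_zero_or_one u1 with h' | h'
    · exact h'
    · exfalso
      have : (u1 * v) % 2 = 1 := by
        rw [Nat.mul_mod, h', hv]
      omega
  obtain ⟨u2, rfl⟩ : 2 ∣ u1 := Nat.dvd_of_mod_eq_zero hu1
  have h2 : u2 * v = w ^ 4 := by ring_nf at h1 ⊢; omega
  have hco2 : Nat.Coprime u2 v := Nat.Coprime.coprime_dvd_left ⟨4, by ring⟩ hco
  obtain ⟨α, hα⟩ := coprime_pow_split hco2 h2
  obtain ⟨β, hβ⟩ := coprime_pow_split (hco2.symm) (by rw [mul_comm]; exact h2)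
  exact ⟨α, β, by omega, hβ⟩

lemma odd_of_pow4_odd {b : ℕ} (h : b ^ 4 % 2 = 1) : b % 2 = 1 := by
  rcases Nat.mod_two_eq_zero_or_one b with h0 | h1
  · rw [Nat.pow_mod, h0] at h; simp at h
  · exact h1

set_option maxHeartbeats 2000000 in
/-- Fermat's right triangle theorem variant: y^4 + z^2 = x^4 has no positive solutions. -/
lemma no_fermat_d44 : ∀ x : ℕ, ∀ y z : ℕ, 0 < y → 0 < z → Nat.gcd x y = 1 →
    y ^ 4 + z ^ 2 = x ^ 4 → False := by
  intro x
  induction x using Nat.strong_induction_on with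
  | _ x IH =>
  intro y z hy hz hco heq
  have hy4 : y ^ 4 < x ^ 4 := by linarith [pow_pos hz 2]
  have hyx : y < x := by
    by_contra hc
    push_neg at hc
    exact absurd (Nat.pow_le_pow_left hc 4) (by omega)
  have hx1 : 0 < x := by omega
  rcases Nat.mod_two_eq_zero_or_one y with hyE | hyO
  · -- y even
    have hxO : x % 2 = 1 := by
      rcases Nat.mod_two_eq_zero_or_one x with hxE | h
      · exfalso
        have h2 : 2 ∣ Nat.gcd x y :=
          Nat.dvd_gcd (Nat.dvd_of_mod_eq_zero hxE) (Nat.dvd_of_mod_eq_zero hyE)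
        rw [hco] at h2; omega
      · exact h
    have hx4 : x ^ 4 % 2 = 1 := by rw [Nat.pow_mod, hxO]
    have hy4m : y ^ 4 % 2 = 0 := by rw [Nat.pow_mod, hyE]
    have hzO : z % 2 = 1 := by
      rcases Nat.mod_two_eq_zero_or_one z with h | h
      · exfalso
        have : z ^ 2 % 2 = 0 := by rw [Nat.pow_mod, h]
        omega
      · exact h
    have hcxz : Nat.Coprime x z := by
      by_contra hcc
      obtain ⟨p, pp, hpx, hpz⟩ := Nat.Prime.not_coprime_iff_dvd.mp hcc
      have hpy : p ∣ y ^ 4 := by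
        have h1 : p ∣ x ^ 4 := hpx.pow (by norm_num)
        have h2 : p ∣ z ^ 2 := hpz.pow (by norm_num)
        have he : y ^ 4 = x ^ 4 - z ^ 2 := by omega
        rw [he]; exact Nat.dvd_sub h1 h2
      have hd : p ∣ Nat.gcd x y := Nat.dvd_gcd hpx (pp.dvd_of_dvd_pow hpy)
      rw [hco] at hd
      exact absurd (Nat.eq_one_of_dvd_one hd) pp.one_lt.ne'
    have hzx2 : z < x ^ 2 := by
      have h2 : z ^ 2 < (x ^ 2) ^ 2 := by
        have hxx : (x ^ 2) ^ 2 = x ^ 4 := by ring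
        linarith [pow_pos hy 4]
      by_contra hc; push_neg at hc
      exact absurd (Nat.pow_le_pow_left hc 2) (by omega)
    have hx2O : x ^ 2 % 2 = 1 := by rw [Nat.pow_mod, hxO]
    obtain ⟨u, hu⟩ : ∃ u, x ^ 2 = z + 2 * u := ⟨(x ^ 2 - z) / 2, by omega⟩
    obtain ⟨v, hv⟩ : ∃ v, x ^ 2 + z = 2 * v := ⟨(x ^ 2 + z) / 2, by omega⟩
    have huv : u + v = x ^ 2 := by omega
    have hvz : v = u + z := by omega
    have hupos : 0 < u := by omega
    have hvpos : 0 < v := by omega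
    obtain ⟨y1, rfl⟩ : 2 ∣ y := Nat.dvd_of_mod_eq_zero hyE
    have hy1 : 0 < y1 := by omega
    have hprod : u * v = 4 * y1 ^ 4 := by
      have h1 : (x:ℤ) ^ 2 = z + 2 * u := by exact_mod_cast hu
      have h2 : (x:ℤ) ^ 2 + z = 2 * v := by exact_mod_cast hv
      have h3 : (2 * (y1:ℤ)) ^ 4 + z ^ 2 = x ^ 4 := by exact_mod_cast heq
      have h4 : 4 * ((u:ℤ) * v) = 16 * (y1:ℤ) ^ 4 := by
        linear_combination (-2 * (v:ℤ)) * h1 - ((x:ℤ) ^ 2 - (z:ℤ)) * h2 - h3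
      have : (u:ℤ) * v = 4 * (y1:ℤ) ^ 4 := by linarith
      exact_mod_cast this
    have hcuv : Nat.Coprime u v := by
      have d1 : Nat.gcd u v ∣ x ^ 2 :=
        huv ▸ Nat.dvd_add (Nat.gcd_dvd_left u v) (Nat.gcd_dvd_right u v)
      have d2 : Nat.gcd u v ∣ z := by
        have h3 := Nat.dvd_sub (Nat.gcd_dvd_right u v) (Nat.gcd_dvd_left u v)
        have h4 : v - u = z := by omega
        rwa [h4] at h3
      have : Nat.gcd u v ∣ 1 := by
        have hc2 : Nat.Coprime (x ^ 2) z := hcxz.pow_left 2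
        exact hc2 ▸ Nat.dvd_gcd d1 d2
      exact Nat.eq_one_of_dvd_one this
    -- exactly one of u, v is even
    have hx2par : (u + v) % 2 = 1 := by rwa [huv]
    obtain ⟨α, β, hx2eq, hβO, hcαβ4, hα, hβ⟩ : ∃ α β, x ^ 2 = 4 * α ^ 4 + β ^ 4 ∧ β % 2 = 1 ∧
        Nat.Coprime (4 * α ^ 4) (β ^ 4) ∧ 0 < α ∧ 0 < β := by
      rcases Nat.mod_two_eq_zero_or_one u with huE | huO
      · have hvO : v % 2 = 1 := by omega
        obtain ⟨α, β, h1, h2⟩ := split4 hcuv hprod huE hvO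
        refine ⟨α, β, by rw [← huv, h1, h2], odd_of_pow4_odd (by omega),
          by rw [← h1, ← h2]; exact hcuv, ?_, ?_⟩
        · rcases Nat.eq_zero_or_pos α with rfl | h
          · simp [h1] at hupos
          · exact h
        · rcases Nat.eq_zero_or_pos β with rfl | h
          · simp [h2] at hvpos
          · exact h
      · have hvE : v % 2 = 0 := by omega
        obtain ⟨α, β, h1, h2⟩ := split4 hcuv.symm (by rw [mul_comm]; exact hprod) hvE huO
        refine ⟨α, β, by rw [← huv, h1, h2]; ring, odd_of_pow4_odd (by omega),
          by rw [← h1, ← h2]; exact hcuv.symm, ?_, ?_⟩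
        · rcases Nat.eq_zero_or_pos α with rfl | h
          · simp [h1] at hvpos
          · exact h
        · rcases Nat.eq_zero_or_pos β with rfl | h
          · simp [h2] at hupos
          · exact h
    -- x^2 = (2α²)² + (β²)², use Pythagorean classification
    have hcast : ((x:ℤ)) ^ 2 = 4 * (α:ℤ) ^ 4 + (β:ℤ) ^ 4 := by exact_mod_cast hx2eq
    have hpt : PythagoreanTriple ((β:ℤ) ^ 2) (2 * (α:ℤ) ^ 2) (x:ℤ) := by
      unfold PythagoreanTriple
      linear_combination -hcast
    have hcβα : Nat.Coprime β α := by
      have h1 : β ∣ β ^ 4 := dvd_pow_self β (by norm_num)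
      have h2 : α ∣ 4 * α ^ 4 := ⟨4 * α ^ 3, by ring⟩
      exact (Nat.Coprime.coprime_dvd_right h2 (Nat.Coprime.coprime_dvd_left h1 hcαβ4.symm))
    have hgcdZ : Int.gcd ((β:ℤ) ^ 2) (2 * (α:ℤ) ^ 2) = 1 := by
      have e1 : ((β ^ 2 : ℕ) : ℤ) = (β:ℤ) ^ 2 := by push_cast; ring
      have e2 : ((2 * α ^ 2 : ℕ) : ℤ) = 2 * (α:ℤ) ^ 2 := by push_cast; ring
      rw [← e1, ← e2, Int.gcd_natCast_natCast]
      have c2 : Nat.Coprime β 2 := Nat.coprime_two_right.mpr (Nat.odd_iff.mpr hβO)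
      exact Nat.Coprime.pow_left 2 (Nat.Coprime.mul_right c2 (hcβα.pow_right 2))
    have hβ2O : ((β:ℤ) ^ 2) % 2 = 1 := by
      obtain ⟨c, hc⟩ : ∃ c, β = 2 * c + 1 := ⟨β / 2, by omega⟩
      have e1 : (β:ℤ) ^ 2 = 4 * (c:ℤ) ^ 2 + 4 * c + 1 := by
        have : (β:ℤ) = 2 * c + 1 := by exact_mod_cast congrArg (Nat.cast : ℕ → ℤ) hc
        rw [this]; ring
      rw [e1]; omega
    obtain ⟨m, n, hm1, hm2, hm3, hmn, hpar, hm0⟩ :=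
      PythagoreanTriple.coprime_classification' hpt hgcdZ hβ2O (by exact_mod_cast hx1)
    have hα2 : m * n = (α:ℤ) ^ 2 := by linarith [hm2]
    have hα2pos : (0:ℤ) < (α:ℤ) ^ 2 := by positivity
    have hnpos : 0 < n := by
      rcases lt_trichotomy n 0 with h | h | h
      · exfalso
        have hm0' : 0 < m := by
          rcases eq_or_lt_of_le hm0 with h' | h'
          · exfalso; rw [← h'] at hα2; simp at hα2; linarith
          · exact h'
        linarith [mul_neg_of_pos_of_neg hm0' h]
      · exfalso; rw [h] at hα2; simp at hα2; linarith
      · exact h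
    have hmpos : 0 < m := by
      rcases eq_or_lt_of_le hm0 with h' | h'
      · exfalso; rw [← h'] at hα2; simp at hα2; linarith
      · exact h'
    have hcmn : IsCoprime m n := Int.isCoprime_iff_gcd_eq_one.mpr hmn
    obtain ⟨e, he⟩ := Int.sq_of_isCoprime hcmn hα2
    obtain ⟨f, hf⟩ := Int.sq_of_isCoprime hcmn.symm (by linarith [hα2] : n * m = (α:ℤ) ^ 2)
    have hme : m = e ^ 2 := by
      rcases he with h | h
      · exact h
      · exfalso; linarith [sq_nonneg e]
    have hnf : n = f ^ 2 := by
      rcases hf with h | h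
      · exact h
      · exfalso; linarith [sq_nonneg f]
    set E := e.natAbs with hE
    set F := f.natAbs with hF
    have heE : (e:ℤ) ^ 2 = ((E:ℕ):ℤ) ^ 2 := (Int.natAbs_sq e).symm
    have hfF : (f:ℤ) ^ 2 = ((F:ℕ):ℤ) ^ 2 := (Int.natAbs_sq f).symm
    have hxEF : (x:ℤ) = (E:ℤ) ^ 4 + (F:ℤ) ^ 4 := by
      rw [hm3, hme, hnf]
      linear_combination ((e:ℤ) ^ 2 + (E:ℤ) ^ 2) * heE + ((f:ℤ) ^ 2 + (F:ℤ) ^ 2) * hfF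
    have hxEFn : x = E ^ 4 + F ^ 4 := by exact_mod_cast hxEF
    have hβEF : F ^ 4 + β ^ 2 = E ^ 4 := by
      have h1 : ((β:ℤ)) ^ 2 = m ^ 2 - n ^ 2 := hm1
      rw [hme, hnf] at h1
      have h2 : (F:ℤ) ^ 4 + (β:ℤ) ^ 2 = (E:ℤ) ^ 4 := by
        linear_combination h1 + ((e:ℤ) ^ 2 + (E:ℤ) ^ 2) * heE - ((f:ℤ) ^ 2 + (F:ℤ) ^ 2) * hfF
      exact_mod_cast h2
    have hEpos : 0 < E := by
      rcases Nat.eq_zero_or_pos E with h | h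
      · exfalso
        have he0 : e = 0 := Int.natAbs_eq_zero.mp h
        rw [he0] at hme; simp at hme; omega
      · exact h
    have hFpos : 0 < F := by
      rcases Nat.eq_zero_or_pos F with h | h
      · exfalso
        have hf0 : f = 0 := Int.natAbs_eq_zero.mp h
        rw [hf0] at hnf; simp at hnf; omega
      · exact h
    have hEltx : E < x := by
      have h0 : 1 ≤ E ^ 3 := Nat.one_le_pow 3 E hEpos
      have h1 : E ≤ E ^ 4 := by
        calc E = E * 1 := by ring
          _ ≤ E * E ^ 3 := Nat.mul_le_mul_left E h0
          _ = E ^ 4 := by ring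
      have h2 : 0 < F ^ 4 := pow_pos hFpos 4
      omega
    have hgEF : Nat.gcd E F = 1 := by
      have h2 : Nat.Coprime (E ^ 2) (F ^ 2) := by
        rw [hme, hnf] at hmn
        simpa [Int.gcd, Int.natAbs_pow] using hmn
      have h3 : Nat.Coprime E (F ^ 2) :=
        (Nat.coprime_pow_left_iff (show 0 < 2 by norm_num) E (F ^ 2)).mp h2
      exact (Nat.coprime_pow_right_iff (show 0 < 2 by norm_num) E F).mp h3
    exact IH E hEltx F β hFpos hβ hgEF hβEF
  · -- y odd
    rcases Nat.mod_two_eq_zero_or_one x with hxE | hxO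
    · -- x even: contradiction mod 8
      obtain ⟨a, rfl⟩ : ∃ a, x = 2 * a := ⟨x / 2, by omega⟩
      obtain ⟨b, rfl⟩ : ∃ b, y = 2 * b + 1 := ⟨y / 2, by omega⟩
      have h8 : (2 * (b:ZMod 8) + 1) ^ 4 + (z:ZMod 8) ^ 2 = (2 * (a:ZMod 8)) ^ 4 := by
        have hcg := congrArg (fun t : ℕ => (t : ZMod 8)) heq
        push_cast at hcg
        exact hcg
      have hdec : ∀ A B Z : ZMod 8, (2 * B + 1) ^ 4 + Z ^ 2 ≠ (2 * A) ^ 4 := by decide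
      exact hdec _ _ _ h8
    · -- x odd
      have hx2p : 0 < x ^ 2 := pow_pos hx1 2
      have hx2O : x ^ 2 % 2 = 1 := by rw [Nat.pow_mod, hxO]
      have hy2O : y ^ 2 % 2 = 1 := by rw [Nat.pow_mod, hyO]
      have hzE : z % 2 = 0 := by
        have h1 : x ^ 4 % 2 = 1 := by rw [Nat.pow_mod, hxO]
        have h2 : y ^ 4 % 2 = 1 := by rw [Nat.pow_mod, hyO]
        rcases Nat.mod_two_eq_zero_or_one z with h | h
        · exact h
        · exfalso
          have h3 : z ^ 2 % 2 = 1 := by rw [Nat.pow_mod, h]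
          omega
      obtain ⟨z1, rfl⟩ : 2 ∣ z := Nat.dvd_of_mod_eq_zero hzE
      have hz1 : 0 < z1 := by omega
      have hy2x2 : y ^ 2 < x ^ 2 := Nat.pow_lt_pow_left hyx (by norm_num)
      obtain ⟨A, hA⟩ : ∃ A, x ^ 2 + y ^ 2 = 2 * A := ⟨(x ^ 2 + y ^ 2) / 2, by omega⟩
      obtain ⟨B, hB⟩ : ∃ B, x ^ 2 = y ^ 2 + 2 * B := ⟨(x ^ 2 - y ^ 2) / 2, by omega⟩
      have hApos : 0 < A := by omega
      have hBpos : 0 < B := by omega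
      have hABx : A + B = x ^ 2 := by omega
      have hABy : A = B + y ^ 2 := by omega
      have hprod : A * B = z1 ^ 2 := by
        have e1 : (x:ℤ) ^ 2 + (y:ℤ) ^ 2 = 2 * A := by exact_mod_cast hA
        have e2 : (x:ℤ) ^ 2 = (y:ℤ) ^ 2 + 2 * B := by exact_mod_cast hB
        have e3 : (y:ℤ) ^ 4 + (2 * (z1:ℤ)) ^ 2 = (x:ℤ) ^ 4 := by exact_mod_cast heq
        have h4 : 4 * ((A:ℤ) * B) = 4 * (z1:ℤ) ^ 2 := by
          linear_combination (-2 * (B:ℤ)) * e1 - ((x:ℤ) ^ 2 + (y:ℤ) ^ 2) * e2 - e3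
        have h5 : (A:ℤ) * B = (z1:ℤ) ^ 2 := by linarith
        exact_mod_cast h5
      have hcAB : Nat.Coprime A B := by
        have d1 : Nat.gcd A B ∣ x ^ 2 := by
          rw [← hABx]; exact Nat.dvd_add (Nat.gcd_dvd_left A B) (Nat.gcd_dvd_right A B)
        have d2 : Nat.gcd A B ∣ y ^ 2 := by
          have h3 := Nat.dvd_sub (Nat.gcd_dvd_left A B) (Nat.gcd_dvd_right A B)
          have h4 : A - B = y ^ 2 := by omega
          rwa [h4] at h3
        have hc2 : Nat.Coprime (x ^ 2) (y ^ 2) := Nat.Coprime.pow _ _ hco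
        have : Nat.gcd A B ∣ 1 := hc2 ▸ Nat.dvd_gcd d1 d2
        exact Nat.eq_one_of_dvd_one this
      obtain ⟨uu, huu⟩ := coprime_pow_split hcAB hprod
      obtain ⟨vv, hvv⟩ := coprime_pow_split hcAB.symm (by rw [mul_comm]; exact hprod)
      have hnew : vv ^ 4 + (x * y) ^ 2 = uu ^ 4 := by
        have e1 : (A:ℤ) = (uu:ℤ) ^ 2 := by exact_mod_cast huu
        have e2 : (B:ℤ) = (vv:ℤ) ^ 2 := by exact_mod_cast hvv
        have e3 : (A:ℤ) + (B:ℤ) = (x:ℤ) ^ 2 := by exact_mod_cast hABx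
        have e4 : (A:ℤ) = (B:ℤ) + (y:ℤ) ^ 2 := by exact_mod_cast hABy
        have h6 : (vv:ℤ) ^ 4 + ((x:ℤ) * (y:ℤ)) ^ 2 = (uu:ℤ) ^ 4 := by
          linear_combination ((A:ℤ) + (uu:ℤ) ^ 2) * e1 - ((B:ℤ) + (vv:ℤ) ^ 2) * e2 -
            ((A:ℤ) - (B:ℤ)) * e3 - (x:ℤ) ^ 2 * e4
        exact_mod_cast h6
      have hcuv2 : Nat.gcd uu vv = 1 := by
        have h2 : Nat.Coprime (uu ^ 2) (vv ^ 2) := by rw [← huu, ← hvv]; exact hcAB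
        have h3 := (Nat.coprime_pow_left_iff (show 0 < 2 by norm_num) uu (vv ^ 2)).mp h2
        exact (Nat.coprime_pow_right_iff (show 0 < 2 by norm_num) uu vv).mp h3
      have huux : uu < x := by
        have h1 : uu ^ 2 < x ^ 2 := by omega
        by_contra hc
        push_neg at hc
        exact absurd (Nat.pow_le_pow_left hc 2) (by omega)
      have hvpos2 : 0 < vv := by
        rcases Nat.eq_zero_or_pos vv with h | h
        · exfalso; rw [h] at hvv; simp at hvv; omega
        · exact h
      exact IH uu huux vv (x * y) hvpos2 (Nat.mul_pos hx1 hy) hcuv2 hnew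

theorem stmt_4
    (hFLT : ∀ m : ℕ, 3 ≤ m → ∀ x y z : ℕ, 0 < x → 0 < y → 0 < z →
      x ^ m + y ^ m ≠ z ^ m)
    (n : ℕ) (hn : 2 ≤ n) :
    ¬ ∃ X Y X' Y' : ℕ, 0 < X ∧ 0 < Y ∧ 0 < X' ∧ 0 < Y' ∧
      Nat.gcd X Y = 1 ∧ Nat.gcd X' Y' = 1 ∧
      (X : ℤ) ^ n + (Y : ℤ) ^ n = (X' : ℤ) ^ n - (Y' : ℤ) ^ n ∧
      X * Y = X' * Y' := by
  rintro ⟨X, Y, X', Y', hX, hY, hX', hY', hXY, hXY', heqZ, hprodXY⟩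
  -- natural number version of the equation
  have heqN : X ^ n + Y ^ n + Y' ^ n = X' ^ n := by
    have h1 : (X:ℤ) ^ n + (Y:ℤ) ^ n + (Y':ℤ) ^ n = (X':ℤ) ^ n := by linarith
    exact_mod_cast h1
  -- four number decomposition
  set p := Nat.gcd X X' with hp
  set q := Nat.gcd X Y' with hq
  set r := Nat.gcd Y X' with hr
  set s := Nat.gcd Y Y' with hs
  have hXfac : p * q = X :=
    (Nat.gcd_mul_gcd_eq_iff_dvd_mul_of_coprime hXY').mpr (hprodXY ▸ Dvd.intro Y rfl)
  have hYfac : r * s = Y :=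
    (Nat.gcd_mul_gcd_eq_iff_dvd_mul_of_coprime hXY').mpr (hprodXY ▸ Dvd.intro_left X rfl)
  have hX'fac : p * r = X' := by
    have h1 : Nat.gcd X' X * Nat.gcd X' Y = X' :=
      (Nat.gcd_mul_gcd_eq_iff_dvd_mul_of_coprime hXY).mpr (hprodXY ▸ Dvd.intro Y' rfl)
    rw [Nat.gcd_comm X' X, Nat.gcd_comm X' Y] at h1
    exact h1
  have hY'fac : q * s = Y' := by
    have h1 : Nat.gcd Y' X * Nat.gcd Y' Y = Y' :=
      (Nat.gcd_mul_gcd_eq_iff_dvd_mul_of_coprime hXY).mpr (hprodXY ▸ Dvd.intro_left X' rfl)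
    rw [Nat.gcd_comm Y' X, Nat.gcd_comm Y' Y] at h1
    exact h1
  have hppos : 0 < p := Nat.pos_of_ne_zero (by rintro h; rw [← hXfac, h] at hX; omega)
  have hqpos : 0 < q := Nat.pos_of_ne_zero (by rintro h; rw [← hXfac, h] at hX; omega)
  have hrpos : 0 < r := Nat.pos_of_ne_zero (by rintro h; rw [← hYfac, h] at hY; omega)
  have hspos : 0 < s := Nat.pos_of_ne_zero (by rintro h; rw [← hYfac, h] at hY; omega)
  have cqr : Nat.Coprime q r :=
    Nat.Coprime.coprime_dvd_right (Nat.gcd_dvd_left Y X')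
      (Nat.Coprime.coprime_dvd_left (Nat.gcd_dvd_left X Y') hXY)
  have cps : Nat.Coprime p s :=
    Nat.Coprime.coprime_dvd_right (Nat.gcd_dvd_right Y Y')
      (Nat.Coprime.coprime_dvd_left (Nat.gcd_dvd_right X X') hXY')
  -- main equation in p q r s
  have hE : p ^ n * q ^ n + r ^ n * s ^ n + q ^ n * s ^ n = p ^ n * r ^ n := by
    have h1 : (p * q) ^ n + (r * s) ^ n + (q * s) ^ n = (p * r) ^ n := by
      rw [hXfac, hYfac, hY'fac, hX'fac]; exact heqN
    calc p ^ n * q ^ n + r ^ n * s ^ n + q ^ n * s ^ n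
        = (p * q) ^ n + (r * s) ^ n + (q * s) ^ n := by rw [mul_pow, mul_pow, mul_pow]
      _ = (p * r) ^ n := h1
      _ = p ^ n * r ^ n := mul_pow p r n
  have hQ : 0 < q ^ n := pow_pos hqpos n
  have hR : 0 < r ^ n := pow_pos hrpos n
  have hP : 0 < p ^ n := pow_pos hppos n
  have hS : 0 < s ^ n := pow_pos hspos n
  have hsp : s ^ n < p ^ n := by
    by_contra hc
    push_neg at hc
    have h1 : p ^ n * r ^ n ≤ s ^ n * r ^ n := Nat.mul_le_mul_right _ hc
    have h2 : r ^ n * s ^ n = s ^ n * r ^ n := mul_comm _ _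
    nlinarith [hE, Nat.mul_pos hP hQ]
  have hsub : q ^ n * (p ^ n + s ^ n) = r ^ n * (p ^ n - s ^ n) := by
    have h3 : r ^ n * (p ^ n - s ^ n) + r ^ n * s ^ n = r ^ n * p ^ n := by
      rw [← Nat.mul_add, Nat.sub_add_cancel hsp.le]
    have h4 : q ^ n * (p ^ n + s ^ n) = q ^ n * p ^ n + q ^ n * s ^ n := by ring
    have c1 : p ^ n * q ^ n = q ^ n * p ^ n := mul_comm _ _
    have c2 : p ^ n * r ^ n = r ^ n * p ^ n := mul_comm _ _
    linarith [hE, h3, h4, c1, c2]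
  obtain ⟨t, ht⟩ : r ^ n ∣ p ^ n + s ^ n :=
    (Nat.Coprime.pow _ _ cqr.symm).dvd_of_dvd_mul_left ⟨p ^ n - s ^ n, hsub⟩
  have htpos : 0 < t := by
    rcases Nat.eq_zero_or_pos t with h | h
    · exfalso; rw [h, Nat.mul_zero] at ht; omega
    · exact h
  have hDq : p ^ n - s ^ n = q ^ n * t := by
    have h1 : r ^ n * (q ^ n * t) = r ^ n * (p ^ n - s ^ n) := by
      calc r ^ n * (q ^ n * t) = q ^ n * (r ^ n * t) := by ring
        _ = q ^ n * (p ^ n + s ^ n) := by rw [← ht]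
        _ = r ^ n * (p ^ n - s ^ n) := hsub
    exact (Nat.eq_of_mul_eq_mul_left hR h1).symm
  have hD : p ^ n = s ^ n + q ^ n * t := by omega
  -- t divides 2
  have ht2 : t ∣ 2 := by
    have h1 : t ∣ 2 * p ^ n := ⟨r ^ n + q ^ n, by
      have e : 2 * p ^ n = (p ^ n + s ^ n) + (p ^ n - s ^ n) := by omega
      rw [e, ht, hDq]; ring⟩
    have h2 : t ∣ 2 * s ^ n := ⟨r ^ n - q ^ n, by
      have e : 2 * s ^ n = (p ^ n + s ^ n) - (p ^ n - s ^ n) := by omega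
      rw [e, ht, hDq, Nat.mul_comm t, Nat.sub_mul, Nat.mul_comm (r ^ n) t,
        Nat.mul_comm (q ^ n) t]⟩
    have h3 : t ∣ Nat.gcd (2 * p ^ n) (2 * s ^ n) := Nat.dvd_gcd h1 h2
    rwa [Nat.gcd_mul_left, Nat.Coprime.gcd_eq_one (Nat.Coprime.pow _ _ cps), Nat.mul_one] at h3
  rcases (Nat.dvd_prime Nat.prime_two).mp ht2 with rfl | rfl
  · -- t = 1 : p^n + s^n = r^n and s^n + q^n = p^n
    rw [Nat.mul_one] at ht hD
    rcases eq_or_lt_of_le hn with hn2 | hn3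
    · -- n = 2 : descent
      subst hn2
      have key : s ^ 4 + (q * r) ^ 2 = p ^ 4 := by
        have e1 : (p:ℤ) ^ 2 + (s:ℤ) ^ 2 = (r:ℤ) ^ 2 := by exact_mod_cast ht
        have e2 : (p:ℤ) ^ 2 = (s:ℤ) ^ 2 + (q:ℤ) ^ 2 := by exact_mod_cast hD
        have e3 : (s:ℤ) ^ 4 + ((q:ℤ) * (r:ℤ)) ^ 2 = (p:ℤ) ^ 4 := by
          linear_combination ((s:ℤ) ^ 2 - (p:ℤ) ^ 2) * e1 - (r:ℤ) ^ 2 * e2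
        exact_mod_cast e3
      exact no_fermat_d44 p s (q * r) hspos (Nat.mul_pos hqpos hrpos) cps key
    · -- n ≥ 3 : direct FLT
      exact hFLT n hn3 p s r hppos hspos hrpos ht
  · -- t = 2 : p^n + s^n = 2 r^n and p^n = s^n + 2 q^n, hence s^n + q^n = r^n
    have hA : s ^ n + q ^ n = r ^ n := by omega
    rcases eq_or_lt_of_le hn with hn2 | hn3
    · -- n = 2 : descent
      subst hn2
      have hB : r ^ 2 + q ^ 2 = p ^ 2 := by omega
      have key : q ^ 4 + (s * p) ^ 2 = r ^ 4 := by
        have e1 : (s:ℤ) ^ 2 + (q:ℤ) ^ 2 = (r:ℤ) ^ 2 := by exact_mod_cast hA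
        have e2 : (r:ℤ) ^ 2 + (q:ℤ) ^ 2 = (p:ℤ) ^ 2 := by exact_mod_cast hB
        have e3 : (q:ℤ) ^ 4 + ((s:ℤ) * (p:ℤ)) ^ 2 = (r:ℤ) ^ 4 := by
          linear_combination ((q:ℤ) ^ 2 + (r:ℤ) ^ 2) * e1 - (s:ℤ) ^ 2 * e2
        exact_mod_cast e3
      exact no_fermat_d44 r q (s * p) hqpos (Nat.mul_pos hspos hppos) cqr.symm key
    · -- n ≥ 3 : direct FLT
      exact hFLT n hn3 s q r hspos hqpos hrpos hA
end

section
/- For n ≥ 2, the equation x^n + y^n + z^n = u^n with the side condition x·y = z·u, where gcd(x,y) = 1 and gcd(z,u) = 1, has no solution in positive integers. -/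
set_option maxHeartbeats 1000000

section Aux

private lemma mul_eq_pow_cop {a b c k : ℕ} (h : Nat.Coprime a b) (he : a * b = c ^ k) :
    ∃ d, a = d ^ k := by
  apply exists_eq_pow_of_mul_eq_pow _ he
  rw [Nat.isUnit_iff]
  exact h

private lemma sq_mod2 (t : ℕ) : t ^ 2 % 2 = t % 2 := by
  rcases Nat.even_or_odd t with ⟨q, rfl⟩ | ⟨q, rfl⟩ <;> ring_nf <;> omega

private lemma sq_mod4 (t : ℕ) : t ^ 2 % 4 = 0 ∨ t ^ 2 % 4 = 1 := by
  rcases Nat.even_or_odd t with ⟨q, rfl⟩ | ⟨q, rfl⟩ <;> ring_nf <;> omega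

private lemma pow4_mod4_even (t : ℕ) (h : t % 2 = 0) : t ^ 4 % 4 = 0 := by
  obtain ⟨q, rfl⟩ : ∃ q, t = 2 * q := ⟨t / 2, by omega⟩
  ring_nf; omega

private lemma pow4_mod4_odd (t : ℕ) (h : t % 2 = 1) : t ^ 4 % 4 = 1 := by
  obtain ⟨q, rfl⟩ : ∃ q, t = 2 * q + 1 := ⟨t / 2, by omega⟩
  ring_nf; omega

private lemma pow_lt_pow_base {a b k : ℕ} (hk : k ≠ 0) (h : a ^ k < b ^ k) : a < b :=
  (Nat.pow_lt_pow_iff_left hk).mp h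

/-- The key tail step: no `x` with `x² = 4e⁴ + f⁴` under the inductive hypothesis. -/
private lemma tail_step (x e f : ℕ) (hxo : x % 2 = 1) (hfo : f % 2 = 1)
    (hcop : Nat.Coprime x f) (he : 0 < e) (hf0 : 0 < f)
    (hxef : x ^ 2 = 4 * e ^ 4 + f ^ 4)
    (IH : ∀ m, m < x → ∀ y z : ℕ, 0 < y → 0 < z → m ^ 4 ≠ y ^ 4 + z ^ 2) : False := by
  have he4 : 0 < e ^ 4 := pow_pos he 4
  have hf4 : 0 < f ^ 4 := pow_pos hf0 4
  have hfx : f ^ 2 < x := by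
    have h1 : (f ^ 2) ^ 2 < x ^ 2 := by
      have h2 : (f ^ 2) ^ 2 = f ^ 4 := by ring
      omega
    exact pow_lt_pow_base (by norm_num) h1
  have hf2o : f ^ 2 % 2 = 1 := by have := sq_mod2 f; omega
  set t1 := (x - f ^ 2) / 2 with ht1def
  set t2 := (x + f ^ 2) / 2 with ht2def
  have ht1 : x = f ^ 2 + 2 * t1 := by omega
  have ht2 : x + f ^ 2 = 2 * t2 := by omega
  have ht2' : t2 = f ^ 2 + t1 := by omega
  have hexp : x ^ 2 = f ^ 4 + 4 * (t1 * (f ^ 2 + t1)) := by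
    rw [ht1]; ring
  have hprod : t1 * t2 = e ^ 4 := by rw [ht2']; omega
  have hco : Nat.Coprime t1 t2 := by
    have hd1 : Nat.gcd t1 t2 ∣ x := by
      have hx : x = t1 + t2 := by omega
      rw [hx]; exact dvd_add (Nat.gcd_dvd_left _ _) (Nat.gcd_dvd_right _ _)
    have hd2 : Nat.gcd t1 t2 ∣ f ^ 2 := by
      have hf2 : f ^ 2 = t2 - t1 := by omega
      rw [hf2]; exact Nat.dvd_sub (Nat.gcd_dvd_right _ _) (Nat.gcd_dvd_left _ _)
    have hdd : Nat.gcd t1 t2 ∣ Nat.gcd x (f ^ 2) := Nat.dvd_gcd hd1 hd2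
    have hxf2 : Nat.gcd x (f ^ 2) = 1 := Nat.Coprime.pow_right 2 hcop
    rw [hxf2] at hdd
    exact Nat.dvd_one.mp hdd
  obtain ⟨h, hh⟩ := mul_eq_pow_cop hco hprod
  obtain ⟨g, hg⟩ := mul_eq_pow_cop hco.symm (by rw [mul_comm]; exact hprod)
  have ht1pos : 0 < t1 := by
    rcases Nat.eq_zero_or_pos t1 with h0 | h0
    · rw [h0, zero_mul] at hprod; omega
    · exact h0
  have ht2pos : 0 < t2 := by
    rcases Nat.eq_zero_or_pos t2 with h0 | h0
    · rw [h0, mul_zero] at hprod; omega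
    · exact h0
  have hgpos : 0 < g := by
    rcases Nat.eq_zero_or_pos g with h0 | h0
    · rw [h0] at hg; simp at hg; omega
    · exact h0
  have hhpos : 0 < h := by
    rcases Nat.eq_zero_or_pos h with h0 | h0
    · rw [h0] at hh; simp at hh; omega
    · exact h0
  have hgx : g < x := by
    have h1 : g ^ 4 < x := by omega
    have h2 : g ≤ g ^ 4 := Nat.le_self_pow (by norm_num) g
    omega
  exact IH g hgx h f hhpos hf0 (by omega)

private lemma descent : ∀ x y z : ℕ, 0 < y → 0 < z → x ^ 4 ≠ y ^ 4 + z ^ 2 := by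
  intro x
  induction x using Nat.strong_induction_on with
  | _ x IH =>
  intro y z hy hz heq
  have hzsq : 0 < z ^ 2 := pow_pos hz 2
  have hy4 : 0 < y ^ 4 := pow_pos hy 4
  have hyx : y < x := by
    apply pow_lt_pow_base (k := 4) (by norm_num); omega
  have hx : 0 < x := lt_of_le_of_lt (Nat.zero_le y) hyx
  by_cases hg : Nat.gcd x y = 1
  swap
  · -- reduce to the coprime case
    have hgpos : 0 < Nat.gcd x y := Nat.gcd_pos_of_pos_left _ hx
    have hg2 : 2 ≤ Nat.gcd x y := by omega
    obtain ⟨x1, hx1⟩ := Nat.gcd_dvd_left x y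
    obtain ⟨y1, hy1⟩ := Nat.gcd_dvd_right x y
    set g := Nat.gcd x y with hgdef
    have hx1pos : 0 < x1 := by
      rcases Nat.eq_zero_or_pos x1 with h0 | h0
      · rw [h0, mul_zero] at hx1; omega
      · exact h0
    have hy1pos : 0 < y1 := by
      rcases Nat.eq_zero_or_pos y1 with h0 | h0
      · rw [h0, mul_zero] at hy1; omega
      · exact h0
    have he2 : g ^ 4 * x1 ^ 4 = g ^ 4 * y1 ^ 4 + z ^ 2 := by
      rw [hx1, hy1] at heq
      have h1 : (g * x1) ^ 4 = g ^ 4 * x1 ^ 4 := by ring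
      have h2 : (g * y1) ^ 4 = g ^ 4 * y1 ^ 4 := by ring
      rw [h1, h2] at heq; exact heq
    have hdvd : (g ^ 2) ^ 2 ∣ z ^ 2 := by
      have h1 : (g ^ 2) ^ 2 = g ^ 4 := by ring
      rw [h1]
      have h2 : z ^ 2 = g ^ 4 * x1 ^ 4 - g ^ 4 * y1 ^ 4 := by omega
      rw [h2]
      exact Nat.dvd_sub (Dvd.intro _ rfl) (Dvd.intro _ rfl)
    have hdz : g ^ 2 ∣ z := (Nat.pow_dvd_pow_iff (by norm_num)).mp hdvd
    obtain ⟨z1, hz1⟩ := hdz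
    have hz1pos : 0 < z1 := by
      rcases Nat.eq_zero_or_pos z1 with h0 | h0
      · rw [h0, mul_zero] at hz1; omega
      · exact h0
    have hx1lt : x1 < x := by
      rw [hx1]; nlinarith [hx1pos, hg2]
    apply IH x1 hx1lt y1 z1 hy1pos hz1pos
    have h3 : z ^ 2 = g ^ 4 * z1 ^ 2 := by rw [hz1]; ring
    have h4 : g ^ 4 * x1 ^ 4 = g ^ 4 * (y1 ^ 4 + z1 ^ 2) := by
      rw [he2, h3]; ring
    have hg4 : 0 < g ^ 4 := pow_pos hgpos 4
    exact Nat.eq_of_mul_eq_mul_left hg4 h4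
  -- coprime case
  have hy2x2 : y ^ 2 < x ^ 2 := Nat.pow_lt_pow_left hyx (by norm_num)
  have hxodd : x % 2 = 1 := by
    by_contra hxe
    have hx2 : x % 2 = 0 := by omega
    have hyodd : y % 2 = 1 := by
      by_contra hye
      have h2 : (2 : ℕ) ∣ Nat.gcd x y :=
        Nat.dvd_gcd (Nat.dvd_of_mod_eq_zero hx2) (Nat.dvd_of_mod_eq_zero (by omega))
      rw [hg] at h2; omega
    have e1 := pow4_mod4_even x hx2
    have e2 := pow4_mod4_odd y hyodd
    have e3 := sq_mod4 z
    omega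
  have hgXY : Nat.Coprime (x ^ 2) (y ^ 2) := Nat.Coprime.pow _ _ hg
  rcases Nat.even_or_odd' y with ⟨c, hc | hc⟩
  · -- y even
    have hyev : y % 2 = 0 := by omega
    have hX2o : x ^ 2 % 2 = 1 := by have := sq_mod2 x; omega
    have hY2e : y ^ 2 % 2 = 0 := by have := sq_mod2 y; omega
    set r1 := x ^ 2 - y ^ 2 with hr1def
    set r2 := x ^ 2 + y ^ 2 with hr2def
    have hr1 : x ^ 2 = y ^ 2 + r1 := by omega
    have hr2' : r2 = 2 * y ^ 2 + r1 := by omega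
    have hexp : x ^ 4 = y ^ 4 + r1 * (2 * y ^ 2 + r1) := by
      have h1 : x ^ 4 = (x ^ 2) ^ 2 := by ring
      rw [h1, hr1]; ring
    have hprod : r1 * r2 = z ^ 2 := by rw [hr2']; omega
    have hr1o : r1 % 2 = 1 := by omega
    have hr2o : r2 % 2 = 1 := by omega
    have hco12 : Nat.Coprime r1 r2 := by
      set d := Nat.gcd r1 r2 with hddef
      have hdr1 : d ∣ r1 := Nat.gcd_dvd_left _ _
      have hdr2 : d ∣ r2 := Nat.gcd_dvd_right _ _
      have hdo : d % 2 = 1 := by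
        rcases Nat.even_or_odd d with ⟨j, hj⟩ | ⟨j, hj⟩
        · obtain ⟨kk, hkk⟩ := hdr1
          have : r1 = 2 * (j * kk) := by rw [hkk, hj]; ring
          omega
        · omega
      have hd2x : d ∣ 2 * x ^ 2 := by
        have h1 : 2 * x ^ 2 = r1 + r2 := by omega
        rw [h1]; exact dvd_add hdr1 hdr2
      have hd2y : d ∣ 2 * y ^ 2 := by
        have h1 : 2 * y ^ 2 = r2 - r1 := by omega
        rw [h1]; exact Nat.dvd_sub hdr2 hdr1
      have hcd2 : Nat.Coprime d 2 := by
        have h2 : Nat.gcd d 2 ∣ 2 := Nat.gcd_dvd_right _ _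
        have h1 : Nat.gcd d 2 ∣ d := Nat.gcd_dvd_left _ _
        rcases (Nat.dvd_prime Nat.prime_two).mp h2 with h | h
        · exact h
        · exfalso; rw [h] at h1; obtain ⟨kk, hkk⟩ := h1; omega
      have hdx : d ∣ x ^ 2 := hcd2.dvd_of_dvd_mul_left hd2x
      have hdy : d ∣ y ^ 2 := hcd2.dvd_of_dvd_mul_left hd2y
      have hdd : d ∣ Nat.gcd (x ^ 2) (y ^ 2) := Nat.dvd_gcd hdx hdy
      rw [hgXY] at hdd
      exact Nat.dvd_one.mp hdd
    obtain ⟨p, hp⟩ := mul_eq_pow_cop hco12 hprod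
    obtain ⟨q, hq⟩ := mul_eq_pow_cop hco12.symm (by rw [mul_comm]; exact hprod)
    have hpo : p % 2 = 1 := by have := sq_mod2 p; omega
    have hqo : q % 2 = 1 := by have := sq_mod2 q; omega
    have hpq : q ^ 2 = p ^ 2 + 2 * y ^ 2 := by omega
    have hsum : p ^ 2 + q ^ 2 = 2 * x ^ 2 := by omega
    have hy2pos : 0 < y ^ 2 := pow_pos hy 2
    have hplt : p < q := by
      apply pow_lt_pow_base (k := 2) (by norm_num); omega
    set r := (q - p) / 2 with hrdef
    set s := (q + p) / 2 with hsdef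
    have hrs1 : q = p + 2 * r := by omega
    have hrs2 : q + p = 2 * s := by omega
    have hs' : s = p + r := by omega
    have hexp2 : q ^ 2 = p ^ 2 + 4 * (r * (p + r)) := by rw [hrs1]; ring
    have hy2rs : y ^ 2 = 2 * (r * s) := by rw [hs']; omega
    have hw : y = 2 * c := by omega
    have hcpos : 0 < c := by omega
    have hy4c : y ^ 2 = 4 * c ^ 2 := by rw [hw]; ring
    have hrs : r * s = 2 * c ^ 2 := by omega
    have hcopq : Nat.Coprime p q := by
      set d := Nat.gcd p q with hddef
      have h1 : d ^ 2 ∣ r1 := by rw [hp]; exact pow_dvd_pow_of_dvd (Nat.gcd_dvd_left _ _) 2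
      have h2 : d ^ 2 ∣ r2 := by rw [hq]; exact pow_dvd_pow_of_dvd (Nat.gcd_dvd_right _ _) 2
      have h3 : d ^ 2 ∣ Nat.gcd r1 r2 := Nat.dvd_gcd h1 h2
      rw [hco12] at h3
      have h4 : d ^ 2 = 1 := Nat.dvd_one.mp h3
      have h5 : d ∣ 1 := h4 ▸ dvd_pow_self d (by norm_num)
      exact Nat.dvd_one.mp h5
    have hcors : Nat.Coprime r s := by
      set d := Nat.gcd r s with hddef
      have hdq : d ∣ q := by
        have h1 : q = r + s := by omega
        rw [h1]; exact dvd_add (Nat.gcd_dvd_left _ _) (Nat.gcd_dvd_right _ _)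
      have hdp : d ∣ p := by
        have h1 : p = s - r := by omega
        rw [h1]; exact Nat.dvd_sub (Nat.gcd_dvd_right _ _) (Nat.gcd_dvd_left _ _)
      have hdd : d ∣ Nat.gcd p q := Nat.dvd_gcd hdp hdq
      rw [hcopq] at hdd
      exact Nat.dvd_one.mp hdd
    have hc2pos : 0 < c ^ 2 := pow_pos hcpos 2
    have hrpos : 0 < r := by
      rcases Nat.eq_zero_or_pos r with h0 | h0
      · rw [h0, zero_mul] at hrs; omega
      · exact h0
    have hspos : 0 < s := by
      rcases Nat.eq_zero_or_pos s with h0 | h0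
      · rw [h0, mul_zero] at hrs; omega
      · exact h0
    have hexp3 : p ^ 2 + q ^ 2 = 2 * r ^ 2 + 2 * (p + r) ^ 2 := by rw [hrs1]; ring
    have hX : x ^ 2 = r ^ 2 + s ^ 2 := by rw [hs']; omega
    -- one of r, s is even; get x^2 = 4 e^4 + f^4
    have main : ∃ e f : ℕ, 0 < e ∧ 0 < f ∧ f % 2 = 1 ∧ Nat.Coprime x f ∧
        x ^ 2 = 4 * e ^ 4 + f ^ 4 := by
      have gcdxf : ∀ S O : ℕ, Nat.Coprime S O →
          x ^ 2 = S ^ 2 + O ^ 2 → ∀ f : ℕ, O = f ^ 2 → Nat.Coprime x f := by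
        intro S O hcoSO hxSO f hOf
        set d := Nat.gcd x f with hddef
        have hdf : d ∣ O := by rw [hOf]; exact dvd_pow (Nat.gcd_dvd_right _ _) (by norm_num)
        have hdx2 : d ^ 2 ∣ x ^ 2 := pow_dvd_pow_of_dvd (Nat.gcd_dvd_left _ _) 2
        have hdO2 : d ^ 2 ∣ O ^ 2 := pow_dvd_pow_of_dvd hdf 2
        have hdS2 : d ^ 2 ∣ S ^ 2 := by
          have h1 : S ^ 2 = x ^ 2 - O ^ 2 := by omega
          rw [h1]; exact Nat.dvd_sub hdx2 hdO2
        have hdS : d ∣ S := (Nat.pow_dvd_pow_iff (by norm_num : (2:ℕ) ≠ 0)).mp hdS2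
        have hdd : d ∣ Nat.gcd S O := Nat.dvd_gcd hdS hdf
        rw [hcoSO] at hdd
        exact Nat.dvd_one.mp hdd
      rcases Nat.even_or_odd r with ⟨r0, hr0⟩ | hro
      · -- r even, s odd
        have hr0r : r = 2 * r0 := by omega
        have hr0s : r0 * s = c ^ 2 := by
          have h1 : r * s = 2 * (r0 * s) := by rw [hr0r]; ring
          omega
        have hcor0s : Nat.Coprime r0 s :=
          Nat.Coprime.coprime_dvd_left ⟨2, by omega⟩ hcors
        obtain ⟨e, he⟩ := mul_eq_pow_cop hcor0s hr0s
        obtain ⟨f, hf⟩ := mul_eq_pow_cop hcor0s.symm (by rw [mul_comm]; exact hr0s)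
        have hso : s % 2 = 1 := by
          rcases Nat.even_or_odd s with ⟨j, hj⟩ | ⟨j, hj⟩
          · exfalso
            have h2 : (2:ℕ) ∣ Nat.gcd r s := Nat.dvd_gcd ⟨r0, by omega⟩ ⟨j, by omega⟩
            rw [hcors] at h2; omega
          · omega
        refine ⟨e, f, ?_, ?_, ?_, ?_, ?_⟩
        · rcases Nat.eq_zero_or_pos e with h0 | h0
          · exfalso; rw [h0] at he; simp at he
            rw [he, zero_mul] at hr0s; omega
          · exact h0
        · rcases Nat.eq_zero_or_pos f with h0 | h0
          · exfalso; rw [h0] at hf; simp at hf; omega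
          · exact h0
        · have := sq_mod2 f; omega
        · exact gcdxf r s hcors hX f hf
        · have h1 : r ^ 2 = 4 * e ^ 4 := by rw [hr0r, he]; ring
          have h2 : s ^ 2 = f ^ 4 := by rw [hf]; ring
          omega
      · -- r odd, s even
        have hro2 : r % 2 = 1 := by obtain ⟨i, hi⟩ := hro; omega
        have hse : s % 2 = 0 := by
          rcases Nat.even_or_odd s with ⟨j, hj⟩ | ⟨j, hj⟩
          · omega
          · exfalso
            obtain ⟨i, hi⟩ := hro
            have h1 : r * s = 2 * (2 * (i * j) + i + j) + 1 := by rw [hi, hj]; ring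
            omega
        obtain ⟨s0, hs0⟩ : ∃ s0, s = 2 * s0 := ⟨s / 2, by omega⟩
        have hs0r : s0 * r = c ^ 2 := by
          have h1 : r * s = 2 * (s0 * r) := by rw [hs0]; ring
          omega
        have hcos0r : Nat.Coprime s0 r :=
          Nat.Coprime.coprime_dvd_left ⟨2, by omega⟩ hcors.symm
        obtain ⟨e, he⟩ := mul_eq_pow_cop hcos0r hs0r
        obtain ⟨f, hf⟩ := mul_eq_pow_cop hcos0r.symm (by rw [mul_comm]; exact hs0r)
        refine ⟨e, f, ?_, ?_, ?_, ?_, ?_⟩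
        · rcases Nat.eq_zero_or_pos e with h0 | h0
          · exfalso; rw [h0] at he; simp at he
            rw [he, zero_mul] at hs0r; omega
          · exact h0
        · rcases Nat.eq_zero_or_pos f with h0 | h0
          · exfalso; rw [h0] at hf; simp at hf; omega
          · exact h0
        · have := sq_mod2 f; omega
        · exact gcdxf s r hcors.symm (by omega) f hf
        · have h1 : s ^ 2 = 4 * e ^ 4 := by rw [hs0, he]; ring
          have h2 : r ^ 2 = f ^ 4 := by rw [hf]; ring
          omega
    obtain ⟨e, f, hepos, hfpos, hfo, hcoxf, hxef⟩ := main
    exact tail_step x e f hxodd hfo hcoxf hepos hfpos hxef IH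
  · -- y odd
    have hyodd : y % 2 = 1 := by omega
    have hzev : z % 2 = 0 := by
      have e1 := pow4_mod4_odd x hxodd
      have e2 := pow4_mod4_odd y hyodd
      have e3 := sq_mod2 z
      have e4 := sq_mod4 z
      omega
    have hX2o : x ^ 2 % 2 = 1 := by have := sq_mod2 x; omega
    have hY2o : y ^ 2 % 2 = 1 := by have := sq_mod2 y; omega
    set w := z / 2 with hwdef
    have hw : z = 2 * w := by omega
    have hwpos : 0 < w := by omega
    set r1 := (x ^ 2 - y ^ 2) / 2 with hr1def
    set r2 := (x ^ 2 + y ^ 2) / 2 with hr2def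
    have hr1 : x ^ 2 = y ^ 2 + 2 * r1 := by omega
    have hr2 : x ^ 2 + y ^ 2 = 2 * r2 := by omega
    have hr2' : r2 = y ^ 2 + r1 := by omega
    have hexp : x ^ 4 = y ^ 4 + 4 * (r1 * (y ^ 2 + r1)) := by
      have h1 : x ^ 4 = (x ^ 2) ^ 2 := by ring
      rw [h1, hr1]; ring
    have hz4 : z ^ 2 = 4 * w ^ 2 := by rw [hw]; ring
    have hprod : r1 * r2 = w ^ 2 := by rw [hr2']; omega
    have hco12 : Nat.Coprime r1 r2 := by
      have hd1 : Nat.gcd r1 r2 ∣ x ^ 2 := by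
        have hxs : x ^ 2 = r1 + r2 := by omega
        rw [hxs]; exact dvd_add (Nat.gcd_dvd_left _ _) (Nat.gcd_dvd_right _ _)
      have hd2 : Nat.gcd r1 r2 ∣ y ^ 2 := by
        have hys : y ^ 2 = r2 - r1 := by omega
        rw [hys]; exact Nat.dvd_sub (Nat.gcd_dvd_right _ _) (Nat.gcd_dvd_left _ _)
      have hdd : Nat.gcd r1 r2 ∣ Nat.gcd (x ^ 2) (y ^ 2) := Nat.dvd_gcd hd1 hd2
      rw [hgXY] at hdd
      exact Nat.dvd_one.mp hdd
    obtain ⟨p, hp⟩ := mul_eq_pow_cop hco12 hprod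
    obtain ⟨q, hq⟩ := mul_eq_pow_cop hco12.symm (by rw [mul_comm]; exact hprod)
    have hppos : 0 < p := by
      rcases Nat.eq_zero_or_pos p with h0 | h0
      · exfalso; rw [h0] at hp; simp at hp; omega
      · exact h0
    have hqx : q < x := by
      apply pow_lt_pow_base (k := 2) (by norm_num)
      omega
    have hx2 : x ^ 2 = 2 * p ^ 2 + y ^ 2 := by omega
    have hB : q ^ 2 = p ^ 2 + y ^ 2 := by omega
    apply IH q hqx p (x * y) hppos (Nat.mul_pos hx hy)
    have h1 : q ^ 4 = (q ^ 2) ^ 2 := by ring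
    rw [h1, hB, mul_pow, hx2]; ring

end Aux

theorem stmt_5
    (hFLT : ∀ m : ℕ, 3 ≤ m → ∀ x y z : ℕ, 0 < x → 0 < y → 0 < z →
      x ^ m + y ^ m ≠ z ^ m)
    (n : ℕ) (hn : 2 ≤ n) :
    ¬ ∃ x y z u : ℕ, 0 < x ∧ 0 < y ∧ 0 < z ∧ 0 < u ∧
      Nat.gcd x y = 1 ∧ Nat.gcd z u = 1 ∧
      x * y = z * u ∧
      x ^ n + y ^ n + z ^ n = u ^ n := by
  rintro ⟨x, y, z, u, hx, hy, hz, hu, hxy, hzu, hmul, heq⟩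
  -- decompose: x = a*b, y = c*d, z = a*c, u = b*d
  set a := Nat.gcd x z with hadef
  have hapos : 0 < a := Nat.gcd_pos_of_pos_left _ hx
  obtain ⟨b, hb⟩ : a ∣ x := Nat.gcd_dvd_left _ _
  obtain ⟨c, hc⟩ : a ∣ z := Nat.gcd_dvd_right _ _
  have hbpos : 0 < b := by
    rcases Nat.eq_zero_or_pos b with h0 | h0
    · rw [h0, mul_zero] at hb; omega
    · exact h0
  have hcpos : 0 < c := by
    rcases Nat.eq_zero_or_pos c with h0 | h0
    · rw [h0, mul_zero] at hc; omega
    · exact h0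
  have hcobc : Nat.Coprime b c := by
    have h1 := Nat.coprime_div_gcd_div_gcd (m := x) (n := z) hapos
    have hbeq : b = x / a := by rw [hb, Nat.mul_div_cancel_left _ hapos]
    have hceq : c = z / a := by rw [hc, Nat.mul_div_cancel_left _ hapos]
    rw [hbeq, hceq]; exact h1
  have hkey : b * y = c * u := by
    have h1 : a * (b * y) = a * (c * u) := by
      rw [← mul_assoc, ← hb, ← mul_assoc, ← hc]; exact hmul
    exact Nat.eq_of_mul_eq_mul_left hapos h1
  obtain ⟨d, hd⟩ : c ∣ y := hcobc.symm.dvd_of_dvd_mul_left ⟨u, hkey⟩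
  have hdpos : 0 < d := by
    rcases Nat.eq_zero_or_pos d with h0 | h0
    · rw [h0, mul_zero] at hd; omega
    · exact h0
  have hu' : u = b * d := by
    have h1 : c * (b * d) = c * u := by
      have h2 : b * y = c * (b * d) := by rw [hd]; ring
      rw [← h2]; exact hkey
    exact (Nat.eq_of_mul_eq_mul_left hcpos h1).symm
  -- divisibilities
  have dvd_ax : a ∣ x := ⟨b, hb⟩
  have dvd_bx : b ∣ x := ⟨a, by rw [hb]; ring⟩
  have dvd_cy : c ∣ y := ⟨d, hd⟩
  have dvd_dy : d ∣ y := ⟨c, by rw [hd]; ring⟩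
  have dvd_az : a ∣ z := ⟨c, hc⟩
  have dvd_cz : c ∣ z := ⟨a, by rw [hc]; ring⟩
  have dvd_bu : b ∣ u := ⟨d, hu'⟩
  have dvd_du : d ∣ u := ⟨b, by rw [hu']; ring⟩
  -- coprimalities
  have co_ad : Nat.Coprime a d :=
    Nat.Coprime.coprime_dvd_left dvd_ax (Nat.Coprime.coprime_dvd_right dvd_dy hxy)
  -- the equation in terms of a b c d
  have key : a ^ n * b ^ n + c ^ n * d ^ n + a ^ n * c ^ n = b ^ n * d ^ n := by
    rw [hb, hd, hc, hu'] at heq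
    rw [mul_pow, mul_pow, mul_pow, mul_pow] at heq
    exact heq
  have hAB : 0 < a ^ n * b ^ n := Nat.mul_pos (pow_pos hapos n) (pow_pos hbpos n)
  have hCB : c ^ n < b ^ n := by
    have h1 : c ^ n * d ^ n < b ^ n * d ^ n := by omega
    exact Nat.lt_of_mul_lt_mul_right h1
  have hcb : c < b := by
    exact (Nat.pow_lt_pow_iff_left (by omega : n ≠ 0)).mp hCB
  set E := b ^ n - c ^ n with hEdef
  have hE : b ^ n = c ^ n + E := by omega
  have keyE : a ^ n * (b ^ n + c ^ n) = d ^ n * E := by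
    rw [hE] at key ⊢
    ring_nf at key ⊢
    linarith
  have hdBC : d ^ n ∣ b ^ n + c ^ n :=
    (Nat.Coprime.pow n n co_ad.symm).dvd_of_dvd_mul_left ⟨E, keyE⟩
  obtain ⟨k, hk⟩ := hdBC
  have hkpos : 0 < k := by
    rcases Nat.eq_zero_or_pos k with h0 | h0
    · exfalso; rw [h0, mul_zero] at hk
      have := pow_pos hbpos n; have := pow_pos hcpos n; omega
    · exact h0
  have hEAk : E = a ^ n * k := by
    have h3 : d ^ n * (a ^ n * k) = d ^ n * E := by
      rw [hk] at keyE
      ring_nf at keyE ⊢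
      linarith
    exact (Nat.eq_of_mul_eq_mul_left (pow_pos hdpos n) h3).symm
  have hk12 : k = 1 ∨ k = 2 := by
    have h2b : k ∣ 2 * b ^ n := by
      have h1 : 2 * b ^ n = d ^ n * k + a ^ n * k := by omega
      exact ⟨d ^ n + a ^ n, by rw [h1]; ring⟩
    have h2c : k ∣ 2 * c ^ n := by
      have h1 : 2 * c ^ n = (b ^ n + c ^ n) - E := by omega
      rw [h1]
      exact Nat.dvd_sub ⟨d ^ n, by rw [hk]; ring⟩ ⟨a ^ n, by rw [hEAk]; ring⟩
    have hdd : k ∣ Nat.gcd (2 * b ^ n) (2 * c ^ n) := Nat.dvd_gcd h2b h2c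
    rw [Nat.gcd_mul_left, hcobc.pow, mul_one] at hdd
    rcases (Nat.dvd_prime Nat.prime_two).mp hdd with h | h <;> omega
  rcases Nat.lt_or_ge n 3 with h3 | h3
  · -- n = 2 : use the quartic descent
    have hn2 : n = 2 := by omega
    subst hn2
    rcases hk12 with rfl | rfl
    · -- k = 1
      apply descent b c (a * d) hcpos (Nat.mul_pos hapos hdpos)
      have h1 : b ^ 2 + c ^ 2 = d ^ 2 := by omega
      have h2 : b ^ 2 = c ^ 2 + a ^ 2 := by omega
      have hb4 : b ^ 4 = (c ^ 2 + a ^ 2) ^ 2 := by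
        rw [show b ^ 4 = (b ^ 2) ^ 2 by ring, h2]
      have hd2 : d ^ 2 = c ^ 2 + (c ^ 2 + a ^ 2) := by omega
      rw [hb4, mul_pow, hd2]; ring
    · -- k = 2
      apply descent b c (2 * (a * d)) hcpos (by positivity)
      have h1 : b ^ 2 + c ^ 2 = 2 * d ^ 2 := by omega
      have h2 : b ^ 2 = c ^ 2 + 2 * a ^ 2 := by omega
      have hd2 : d ^ 2 = c ^ 2 + a ^ 2 := by omega
      rw [show b ^ 4 = (b ^ 2) ^ 2 by ring, h2,
        show (2 * (a * d)) ^ 2 = 4 * (a ^ 2 * d ^ 2) by ring, hd2]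
      ring
  · -- n ≥ 3 : use FLT
    rcases hk12 with rfl | rfl
    · exact hFLT n h3 b c d hbpos hcpos hdpos (by omega)
    · exact hFLT n h3 a d b hapos hdpos hbpos (by omega)
end

section
/- Let a, b, c, n be positive integers with a·b = c and gcd(a,b) = 1. If a·b is odd and n ≥ 1, then the polynomial x^2 + (a^n + b^n)·x - c^n is irreducible over ℚ. -/
open Polynomial

lemma aux_mod4 (m u v : ℤ) (hu : Odd u) (hv : Odd v) :
    m ^ 2 + (u + v) * m - u * v ≠ 0 := by
  intro h
  have h4 : ((m ^ 2 + (u + v) * m - u * v : ℤ) : ZMod 4) = 0 := by rw [h]; simp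
  obtain ⟨i, hi⟩ := hu
  obtain ⟨j, hj⟩ := hv
  subst hi hj
  push_cast at h4
  have : ∀ x y z : ZMod 4,
      x ^ 2 + ((2*y+1)+(2*z+1)) * x - (2*y+1)*(2*z+1) ≠ 0 := by decide
  exact this _ _ _ h4


lemma quad_eq {R : Type*} [CommRing R] (s t : R) :
    X ^ 2 + C s * X - C t = C 1 * X ^ 2 + C s * X + C (-t) := by
  simp [sub_eq_add_neg]

lemma quad_natDegree {R : Type*} [CommRing R] [Nontrivial R] (s t : R) :
    (X ^ 2 + C s * X - C t).natDegree = 2 := by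
  rw [quad_eq]; exact natDegree_quadratic one_ne_zero

lemma quad_monic {R : Type*} [CommRing R] [Nontrivial R] (s t : R) :
    (X ^ 2 + C s * X - C t).Monic := by
  unfold Monic leadingCoeff
  rw [quad_natDegree, quad_eq]
  simp [coeff_add, coeff_C]

theorem stmt_6 (a b c n : ℕ) (ha : 0 < a) (hb : 0 < b) (hc : 0 < c) (hn : 1 ≤ n)
    (hab : a * b = c) (hcop : Nat.gcd a b = 1) (hodd : Odd (a * b)) :
    Irreducible (X ^ 2 + C ((a : ℚ) ^ n + (b : ℚ) ^ n) * X - C ((c : ℚ) ^ n)) := by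
  have hoa : Odd a := (Nat.odd_mul.mp hodd).1
  have hob : Odd b := (Nat.odd_mul.mp hodd).2
  set s : ℚ := (a : ℚ) ^ n + (b : ℚ) ^ n with hs
  set t : ℚ := (c : ℚ) ^ n with ht
  have hdeg : (X ^ 2 + C s * X - C t).natDegree = 2 := quad_natDegree s t
  have hmonic : (X ^ 2 + C s * X - C t).Monic := quad_monic s t
  rw [hmonic.irreducible_iff_roots_eq_zero_of_degree_le_three (by omega) (by omega)]
  by_contra hroots
  obtain ⟨r, hr⟩ := Multiset.exists_mem_of_ne_zero hroots
  rw [mem_roots hmonic.ne_zero, IsRoot, eval_sub, eval_add, eval_pow, eval_X, eval_mul,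
    eval_C, eval_C, eval_X] at hr
  -- r is an algebraic integer, hence an integer
  have hint : IsIntegral ℤ r := by
    refine ⟨X ^ 2 + C ((a : ℤ) ^ n + (b : ℤ) ^ n) * X - C ((c : ℤ) ^ n),
      quad_monic _ _, ?_⟩
    rw [← aeval_def]
    simp only [map_sub, map_add, map_mul, map_pow, aeval_X, aeval_C, map_intCast, map_natCast, eq_intCast]
    push_cast
    simp only [hs, ht] at hr
    linarith [hr]
  obtain ⟨m, hm⟩ := IsIntegrallyClosed.isIntegral_iff.mp hint
  have hmr : (m : ℚ) = r := hm
  rw [← hmr] at hr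
  have hz : (m : ℤ) ^ 2 + ((a : ℤ) ^ n + (b : ℤ) ^ n) * m - (a : ℤ) ^ n * (b : ℤ) ^ n = 0 := by
    have : ((m : ℤ) ^ 2 + ((a : ℤ) ^ n + (b : ℤ) ^ n) * m - (a : ℤ) ^ n * (b : ℤ) ^ n : ℚ) = 0 := by
      push_cast
      simp only [hs, ht] at hr
      have hcab : (c : ℚ) = (a : ℚ) * b := by exact_mod_cast hab.symm
      rw [hcab, mul_pow] at hr
      linarith [hr]
    exact_mod_cast this
  exact aux_mod4 m _ _ (by exact_mod_cast (hoa.pow : Odd (a ^ n))) (by exact_mod_cast (hob.pow : Odd (b ^ n))) hz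
end

section
/- For n > 2, the system x₁³ + x₂³ + x₃³ + 3·x₄ⁿ = 0 together with (x₁ + x₂ + x₃)·x₄ = 0, where x₁, x₂, x₃ are pairwise coprime and x₁·x₂·x₃ ≠ 0, has no integer solutions, assuming Fermat's Last Theorem for exponent n. -/
private lemma assoc_delta {n : ℕ} {a x : ℤ} (h : Associated (a ^ n) x) :
    ∃ δ : ℤ, (δ = 1 ∨ δ = -1) ∧ a ^ n * δ = x := by
  obtain ⟨u, hu⟩ := h
  exact ⟨(u : ℤ), Int.isUnit_iff.mp u.isUnit, hu⟩

theorem stmt_9 (n : ℕ) (hn : 2 < n)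
    (hFLT : ∀ a b c : ℕ, 0 < a → 0 < b → 0 < c → a ^ n + b ^ n ≠ c ^ n) :
    ¬ ∃ x₁ x₂ x₃ x₄ : ℤ,
      IsCoprime x₁ x₂ ∧ IsCoprime x₁ x₃ ∧ IsCoprime x₂ x₃ ∧
      x₁ * x₂ * x₃ ≠ 0 ∧
      x₁ ^ 3 + x₂ ^ 3 + x₃ ^ 3 + 3 * x₄ ^ n = 0 ∧
      (x₁ + x₂ + x₃) * x₄ = 0 := by
  rintro ⟨x₁, x₂, x₃, x₄, h12, h13, h23, hne, heq, hz⟩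
  have h1 : x₁ ≠ 0 := fun h => hne (by simp [h])
  have h2 : x₂ ≠ 0 := fun h => hne (by simp [h])
  have h3 : x₃ ≠ 0 := fun h => hne (by simp [h])
  have hn0 : n ≠ 0 := by omega
  have hF : FermatLastTheoremWith ℤ n := by
    rw [← fermatLastTheoremFor_iff_int]
    intro a b c ha hb hc
    exact hFLT a b c (Nat.pos_of_ne_zero ha) (Nat.pos_of_ne_zero hb) (Nat.pos_of_ne_zero hc)
  rcases mul_eq_zero.mp hz with hs | h4
  · -- Case: x₁ + x₂ + x₃ = 0
    set s : ℤ := x₁ + x₂ with hsdef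
    have hx3 : x₃ = -s := by simp only [hsdef]; linarith
    have hs0 : s ≠ 0 := fun h => h3 (by rw [hx3, h, neg_zero])
    rw [hx3] at h13 h23 heq
    have c13 : IsCoprime x₁ s := by simpa using h13.neg_right
    have c23 : IsCoprime x₂ s := by simpa using h23.neg_right
    have key3 : 3 * (x₁ * x₂ * s) = 3 * x₄ ^ n := by
      rw [hsdef] at heq ⊢; linear_combination -heq
    have key : x₁ * x₂ * s = x₄ ^ n :=
      Int.eq_of_mul_eq_mul_left (by norm_num) key3
    obtain ⟨a, hA⟩ := exists_associated_pow_of_mul_eq_pow' (h12.mul_right c13)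
      (show x₁ * (x₂ * s) = x₄ ^ n by linarith [key, mul_assoc x₁ x₂ s])
    obtain ⟨b, hB⟩ := exists_associated_pow_of_mul_eq_pow' (h12.symm.mul_right c23)
      (show x₂ * (x₁ * s) = x₄ ^ n by rw [← key]; ring)
    obtain ⟨c, hC⟩ := exists_associated_pow_of_mul_eq_pow' (c13.symm.mul_right c23.symm)
      (show s * (x₁ * x₂) = x₄ ^ n by rw [← key]; ring)
    obtain ⟨δ₁, hδ1, hu1⟩ := assoc_delta hA
    obtain ⟨δ₂, hδ2, hu2⟩ := assoc_delta hB
    obtain ⟨δ₃, hδ3, hu3⟩ := assoc_delta hC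
    have ha : a ≠ 0 := by
      rintro rfl; apply h1; rw [← hu1]; simp [zero_pow hn0]
    have hb : b ≠ 0 := by
      rintro rfl; apply h2; rw [← hu2]; simp [zero_pow hn0]
    have hc : c ≠ 0 := by
      rintro rfl; apply hs0; rw [← hu3]; simp [zero_pow hn0]
    have main : a ^ n * δ₁ + b ^ n * δ₂ = c ^ n * δ₃ := by
      rw [hu1, hu2, hu3]
    rcases Nat.even_or_odd n with he | ho
    · -- even n : all n-th powers positive
      have pa : 0 < a ^ n := he.pow_pos ha
      have pb : 0 < b ^ n := he.pow_pos hb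
      have pc : 0 < c ^ n := he.pow_pos hc
      rcases hδ1 with rfl | rfl <;> rcases hδ2 with rfl | rfl <;> rcases hδ3 with rfl | rfl <;>
        first
          | exact hF a b c ha hb hc (by linarith)
          | exact hF b c a hb hc ha (by linarith)
          | exact hF a c b ha hc hb (by linarith)
          | linarith
    · -- odd n : signs can be absorbed into the bases
      have pd : ∀ δ : ℤ, (δ = 1 ∨ δ = -1) → δ ^ n = δ := by
        rintro δ (rfl | rfl)
        · simp
        · simpa using ho.neg_pow (1 : ℤ)
      have d1 : δ₁ ≠ 0 := by rcases hδ1 with rfl | rfl <;> norm_num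
      have d2 : δ₂ ≠ 0 := by rcases hδ2 with rfl | rfl <;> norm_num
      have d3 : δ₃ ≠ 0 := by rcases hδ3 with rfl | rfl <;> norm_num
      refine hF (a * δ₁) (b * δ₂) (c * δ₃) (mul_ne_zero ha d1) (mul_ne_zero hb d2)
        (mul_ne_zero hc d3) ?_
      rw [mul_pow, mul_pow, mul_pow, pd δ₁ hδ1, pd δ₂ hδ2, pd δ₃ hδ3]
      exact main
  · -- Case: x₄ = 0, use FLT for exponent 3
    subst h4
    rw [zero_pow hn0, mul_zero, add_zero] at heq
    have hF3 : FermatLastTheoremWith ℤ 3 :=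
      fermatLastTheoremFor_iff_int.mp fermatLastTheoremThree
    have : x₁ ^ 3 + x₂ ^ 3 = (-x₃) ^ 3 := by ring_nf; linarith
    exact hF3 x₁ x₂ (-x₃) h1 h2 (neg_ne_zero.mpr h3) this
end

section
/- The equation x₁·x₂·(x₁ + x₂) = x₃⁴ has no solutions in nonzero integers x₁, x₂, x₃ with gcd(x₁, x₂) = 1. -/
lemma aux_pow4 {a b c : ℤ} (hab : IsCoprime a b) (h : a * b = c ^ 4) :
    ∃ d : ℤ, a = d ^ 4 ∨ a = -d ^ 4 := by
  obtain ⟨d, hd⟩ := exists_associated_pow_of_mul_eq_pow' hab h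
  rw [Int.associated_iff] at hd
  rcases hd with h1 | h1
  · exact ⟨d, Or.inl h1.symm⟩
  · exact ⟨d, Or.inr (by linarith)⟩

theorem stmt_11 :
    ¬ ∃ x₁ x₂ x₃ : ℤ, x₁ ≠ 0 ∧ x₂ ≠ 0 ∧ x₃ ≠ 0 ∧
      Int.gcd x₁ x₂ = 1 ∧ x₁ * x₂ * (x₁ + x₂) = x₃ ^ 4 := by
  rintro ⟨x₁, x₂, x₃, h1, h2, h3, hg, heq⟩
  have hco : IsCoprime x₁ x₂ := Int.isCoprime_iff_gcd_eq_one.mpr hg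
  have hco13 : IsCoprime x₁ (x₁ + x₂) := by
    simpa [add_comm] using hco.add_mul_left_right 1
  have hco23 : IsCoprime x₂ (x₁ + x₂) := by
    simpa using hco.symm.add_mul_left_right 1
  obtain ⟨a, ha⟩ := aux_pow4 (hco.mul_right hco13)
    (show x₁ * (x₂ * (x₁ + x₂)) = x₃ ^ 4 by rw [← heq]; ring)
  obtain ⟨b, hb⟩ := aux_pow4 (hco.symm.mul_right hco23)
    (show x₂ * (x₁ * (x₁ + x₂)) = x₃ ^ 4 by rw [← heq]; ring)
  obtain ⟨c, hc⟩ := aux_pow4 (hco13.symm.mul_right hco23.symm)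
    (show (x₁ + x₂) * (x₁ * x₂) = x₃ ^ 4 by rw [← heq]; ring)
  have hsum : x₁ + x₂ ≠ 0 := by
    intro hs
    apply h3
    have : x₃ ^ 4 = 0 := by rw [← heq, hs, mul_zero]
    exact pow_eq_zero_iff (by norm_num) |>.mp this
  have ha0 : a ≠ 0 := by rintro rfl; rcases ha with h | h <;> simp_all
  have hb0 : b ≠ 0 := by rintro rfl; rcases hb with h | h <;> simp_all
  have hc0 : c ≠ 0 := by rintro rfl; rcases hc with h | h <;> simp at h <;> exact hsum h
  have ha4 : 0 < a ^ 4 := lt_of_le_of_ne (by positivity) (Ne.symm (pow_ne_zero 4 ha0))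
  have hb4 : 0 < b ^ 4 := lt_of_le_of_ne (by positivity) (Ne.symm (pow_ne_zero 4 hb0))
  have hc4 : 0 < c ^ 4 := lt_of_le_of_ne (by positivity) (Ne.symm (pow_ne_zero 4 hc0))
  have key : ∀ u v w : ℤ, u ≠ 0 → v ≠ 0 → u ^ 4 + v ^ 4 ≠ w ^ 4 := by
    intro u v w hu hv h
    exact not_fermat_42 hu hv (h.trans (show w ^ 4 = (w ^ 2) ^ 2 by ring))
  rcases ha with ha | ha <;> rcases hb with hb | hb <;> rcases hc with hc | hc
  · exact key a b c ha0 hb0 (by linarith)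
  · linarith
  · exact key b c a hb0 hc0 (by linarith)
  · exact key a c b ha0 hc0 (by linarith)
  · exact key a c b ha0 hc0 (by linarith)
  · exact key b c a hb0 hc0 (by linarith)
  · linarith
  · exact key a b c ha0 hb0 (by linarith)
end

section
/- Fermat's Last Theorem for exponent n > 2 is equivalent to the statement: there are no positive integers x₁, x₂, x₃ with gcd(x₁, x₂) = 1 and x₁·x₂·(x₁ + x₂) = x₃ⁿ. -/
theorem stmt_13 (n : ℕ) (hn : 2 < n) :
    (∀ a b c : ℕ, 0 < a → 0 < b → 0 < c → a ^ n + b ^ n ≠ c ^ n) ↔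
    ¬ ∃ x₁ x₂ x₃ : ℕ, 0 < x₁ ∧ 0 < x₂ ∧ 0 < x₃ ∧
      Nat.gcd x₁ x₂ = 1 ∧ x₁ * x₂ * (x₁ + x₂) = x₃ ^ n := by
  have hn0 : n ≠ 0 := by omega
  constructor
  · rintro flt ⟨x₁, x₂, x₃, h1, h2, h3, hco, heq⟩
    have hco' : Nat.Coprime x₁ x₂ := hco
    have hc1 : Nat.Coprime x₁ (x₁ + x₂) := Nat.coprime_self_add_right.mpr hco'
    have hc2 : Nat.Coprime x₂ (x₁ + x₂) := Nat.coprime_add_self_right.mpr hco'.symm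
    have hc12 : Nat.Coprime (x₁ * x₂) (x₁ + x₂) := Nat.Coprime.mul hc1 hc2
    obtain ⟨r, hr⟩ : ∃ r, x₁ + x₂ = r ^ n :=
      exists_eq_pow_of_mul_eq_pow (isUnit_of_dvd_one (dvd_of_eq hc12.symm.gcd_eq_one))
        (c := x₃) (by rw [mul_comm]; exact heq)
    obtain ⟨s, hseq⟩ : ∃ s, x₁ * x₂ = s ^ n :=
      exists_eq_pow_of_mul_eq_pow (isUnit_of_dvd_one (dvd_of_eq hc12.gcd_eq_one)) heq
    obtain ⟨p, hp⟩ : ∃ p, x₁ = p ^ n :=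
      exists_eq_pow_of_mul_eq_pow (isUnit_of_dvd_one (dvd_of_eq hco'.gcd_eq_one)) hseq
    obtain ⟨q, hq⟩ : ∃ q, x₂ = q ^ n :=
      exists_eq_pow_of_mul_eq_pow (isUnit_of_dvd_one (dvd_of_eq hco'.symm.gcd_eq_one))
        (by rw [mul_comm]; exact hseq)
    have hp0 : 0 < p := by
      rcases Nat.eq_zero_or_pos p with h | h
      · subst h; simp [hn0] at hp; omega
      · exact h
    have hq0 : 0 < q := by
      rcases Nat.eq_zero_or_pos q with h | h
      · subst h; simp [hn0] at hq; omega
      · exact h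
    have hr0 : 0 < r := by
      rcases Nat.eq_zero_or_pos r with h | h
      · subst h; simp [hn0] at hr; omega
      · exact h
    exact flt p q r hp0 hq0 hr0 (by rw [← hp, ← hq, ← hr])
  · rintro hns a b c ha hb hc heq
    apply hns
    obtain ⟨d, hd⟩ : ∃ d, d = Nat.gcd a b := ⟨_, rfl⟩
    have hd0 : 0 < d := hd ▸ Nat.gcd_pos_of_pos_left _ ha
    set a' := a / d with ha'def
    set b' := b / d with hb'def
    have ha' : a = d * a' := (Nat.mul_div_cancel' (hd ▸ Nat.gcd_dvd_left a b)).symm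
    have hb' : b = d * b' := (Nat.mul_div_cancel' (hd ▸ Nat.gcd_dvd_right a b)).symm
    have ha'0 : 0 < a' := Nat.div_pos (Nat.le_of_dvd ha (hd ▸ Nat.gcd_dvd_left a b)) hd0
    have hb'0 : 0 < b' := Nat.div_pos (Nat.le_of_dvd hb (hd ▸ Nat.gcd_dvd_right a b)) hd0
    have hcop : Nat.Coprime a' b' := by
      rw [ha'def, hb'def, hd]
      exact Nat.coprime_div_gcd_div_gcd (hd ▸ hd0)
    have hdc : d ∣ c := by
      rw [← Nat.pow_dvd_pow_iff hn0, ← heq]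
      exact Dvd.dvd.add ⟨a'^n, by rw [ha']; ring⟩ ⟨b'^n, by rw [hb']; ring⟩
    obtain ⟨c', hc'⟩ := hdc
    have hc'0 : 0 < c' := by
      rcases Nat.eq_zero_or_pos c' with h | h
      · subst h; simp at hc'; omega
      · exact h
    have heq' : a' ^ n + b' ^ n = c' ^ n := by
      have h2 : d ^ n * (a' ^ n + b' ^ n) = d ^ n * c' ^ n := by
        rw [ha', hb', hc'] at heq
        rw [mul_pow, mul_pow, mul_pow] at heq
        rw [Nat.mul_add]; exact heq
      exact Nat.eq_of_mul_eq_mul_left (by positivity) h2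
    refine ⟨a' ^ n, b' ^ n, a' * b' * c', by positivity, by positivity, by positivity, ?_, ?_⟩
    · exact hcop.pow n n
    · rw [heq', mul_pow, mul_pow]
end

section
/- If a monic integer polynomial p(x) = xⁿ + a_{n-2}x^{n-2} + ... + a₁x ± a₀ with a₁·a₀ ≠ 0, gcd(a₁,a₀) = 1, and constant term ±c^k (c a positive integer) splits into linear factors over ℚ, then there exist pairwise coprime positive integers x₁,...,x_h, y₁,...,y_l with h + l = n and x₁^k + ... + x_h^k = y₁^k + ... + y_l^k, where each |root| is a k-th power. -/
open Polynomial Multiset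


lemma nat_coprime_multiset_prod {a : ℕ} {m : Multiset ℕ}
    (h : ∀ b ∈ m, Nat.Coprime a b) : Nat.Coprime a m.prod := by
  induction m using Multiset.induction with
  | empty => simp
  | cons b m ih =>
    rw [Multiset.prod_cons]
    exact Nat.Coprime.mul_right (h b (Multiset.mem_cons_self _ _))
      (ih fun b' hb' => h b' (Multiset.mem_cons_of_mem hb'))

lemma pair_le_map {α β : Type*} [DecidableEq α] [DecidableEq β] {f : α → β} {s : Multiset α}
    {a b : β} (hab : ({a, b} : Multiset β) ≤ s.map f) :
    ∃ a' b', f a' = a ∧ f b' = b ∧ ({a', b'} : Multiset α) ≤ s := by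
  have ha : a ∈ s.map f := Multiset.mem_of_le hab (by simp)
  obtain ⟨a', ha', rfl⟩ := Multiset.mem_map.mp ha
  have hs : s = a' ::ₘ s.erase a' := (Multiset.cons_erase ha').symm
  have hb : b ∈ (s.erase a').map f := by
    have h1 : ({f a', b} : Multiset β) = f a' ::ₘ {b} := rfl
    have h2 : s.map f = f a' ::ₘ (s.erase a').map f := by
      conv_lhs => rw [hs]
      simp
    rw [h1, h2, Multiset.cons_le_cons_iff] at hab
    exact Multiset.mem_of_le hab (by simp)
  obtain ⟨b', hb', rfl⟩ := Multiset.mem_map.mp hb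
  refine ⟨a', b', rfl, rfl, ?_⟩
  rw [hs]
  exact Multiset.cons_le_cons a' ((Multiset.singleton_le).2 hb')

lemma exists_pow_eq {m : Multiset ℕ} {c k : ℕ}
    (hcop : ∀ a b, ({a, b} : Multiset ℕ) ≤ m → Nat.Coprime a b)
    (hprod : m.prod = c ^ k) :
    ∀ a ∈ m, ∃ d, a = d ^ k := by
  intro a ha
  have hm : m = a ::ₘ m.erase a := (Multiset.cons_erase ha).symm
  have hc : Nat.Coprime a (m.erase a).prod := by
    apply nat_coprime_multiset_prod
    intro b hb
    apply hcop
    rw [hm, Multiset.insert_eq_cons]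
    exact Multiset.cons_le_cons a ((Multiset.singleton_le).2 hb)
  have hmul : a * (m.erase a).prod = c ^ k := by
    rw [← Multiset.prod_cons, ← hm, hprod]
  exact exists_eq_pow_of_mul_eq_pow (by rwa [Nat.isUnit_iff]) hmul


lemma exists_int_roots (p : ℤ[X]) (hmonic : p.Monic)
    (hsplit : Polynomial.Splits (p.map (Int.castRingHom ℚ))) :
    ∃ s : Multiset ℤ, p = (s.map fun r => X - C r).prod := by
  set q := p.map (Int.castRingHom ℚ) with hq
  have hqm : q.Monic := hmonic.map _
  have hqs : Splits q := hsplit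
  have heq : q = (q.roots.map fun a => X - C a).prod :=
    hqs.eq_prod_roots_of_monic hqm
  have hint : ∀ r ∈ q.roots, ((r.num : ℚ)) = r := by
    intro r hr
    have hroot : aeval r p = 0 := by
      have := isRoot_of_mem_roots hr
      rw [IsRoot, hq, eval_map] at this
      rw [aeval_def]
      rw [algebraMap_int_eq]; exact this
    obtain ⟨z, hz⟩ := isInteger_of_is_root_of_monic hmonic hroot
    have hz' : r.num = z := by
      have h2 : ((z : ℚ)) = r := hz
      rw [← h2]; simp
    rw [hz']; exact hz
  refine ⟨q.roots.map Rat.num, ?_⟩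
  apply Polynomial.map_injective (Int.castRingHom ℚ) Int.cast_injective
  rw [Polynomial.map_multiset_prod, Multiset.map_map, Multiset.map_map]
  have hmc : Multiset.map ((Polynomial.map (Int.castRingHom ℚ) ∘ fun r => X - C r) ∘ Rat.num)
      q.roots = Multiset.map (fun a => X - C a) q.roots :=
    Multiset.map_congr rfl (fun r hr => by
      simp only [Function.comp_apply, Polynomial.map_sub, map_X, map_C]
      rw [show ((Int.castRingHom ℚ) (r.num)) = ((r.num : ℚ)) from rfl, hint r hr])
  rw [hmc, ← heq]


variable {s : Multiset ℤ}

lemma my_coeff_zero (s : Multiset ℤ) :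
    ((s.map fun r => X - C r).prod).coeff 0 = (s.map fun r => -r).prod := by
  rw [coeff_zero_eq_eval_zero, eval_multiset_prod, Multiset.map_map]
  apply congrArg
  apply Multiset.map_congr rfl
  intro r _
  simp

lemma my_esymm_one (s : Multiset ℤ) : s.esymm 1 = s.sum := by
  rw [Multiset.esymm, powersetCard_one, Multiset.map_map]
  simp

lemma my_coeff_sub_one (s : Multiset ℤ) (hcard : 2 ≤ Multiset.card s) :
    ((s.map fun r => X - C r).prod).coeff (Multiset.card s - 1) = -s.sum := by
  rw [Multiset.prod_X_sub_C_coeff s (Nat.sub_le _ _)]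
  have h1 : Multiset.card s - (Multiset.card s - 1) = 1 := by omega
  rw [h1, my_esymm_one]
  ring

lemma my_coeff_one (s : Multiset ℤ) (hcard : 2 ≤ Multiset.card s) :
    ((s.map fun r => X - C r).prod).coeff 1
      = (-1) ^ (Multiset.card s - 1) * s.esymm (Multiset.card s - 1) := by
  rw [Multiset.prod_X_sub_C_coeff s (by omega)]


lemma dvd_esymm_of_two (q : ℕ) (s : Multiset ℤ)
    (h2 : 2 ≤ Multiset.card (s.filter (fun r => (q : ℤ) ∣ r))) :
    (q : ℤ) ∣ s.esymm (Multiset.card s - 1) := by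
  rw [Multiset.esymm]
  apply Multiset.dvd_sum
  intro x hx
  obtain ⟨u, hu, rfl⟩ := Multiset.mem_map.mp hx
  rw [Multiset.mem_powersetCard] at hu
  obtain ⟨hus, hcard⟩ := hu
  have hsum : s - u + u = s := tsub_add_cancel_of_le hus
  have hcards : Multiset.card (s - u) = Multiset.card s - Multiset.card u := by
    rw [← hsum]; simp
  have hcs : 2 ≤ Multiset.card s :=
    le_trans h2 (Multiset.card_le_card (Multiset.filter_le _ _))
  have h1 : Multiset.card (s - u) = 1 := by omega
  have hfil : Multiset.card (s.filter (fun r => (q : ℤ) ∣ r))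
      = Multiset.card ((s - u).filter (fun r => (q : ℤ) ∣ r))
        + Multiset.card (u.filter (fun r => (q : ℤ) ∣ r)) := by
    rw [← Multiset.card_add, ← Multiset.filter_add, hsum]
  have hle : Multiset.card ((s - u).filter (fun r => (q : ℤ) ∣ r)) ≤ 1 := by
    rw [← h1]; exact Multiset.card_le_card (Multiset.filter_le _ _)
  have hpos : 0 < Multiset.card (u.filter (fun r => (q : ℤ) ∣ r)) := by omega
  rw [Multiset.card_pos_iff_exists_mem] at hpos
  obtain ⟨r, hr⟩ := hpos
  rw [Multiset.mem_filter] at hr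
  exact dvd_trans hr.2 (Multiset.dvd_prod hr.1)

lemma dvd_prod_of_two (q : ℕ) (s : Multiset ℤ)
    (h2 : 2 ≤ Multiset.card (s.filter (fun r => (q : ℤ) ∣ r))) :
    (q : ℤ) ∣ (s.map fun r => -r).prod := by
  have hpos : 0 < Multiset.card (s.filter (fun r => (q : ℤ) ∣ r)) := by omega
  rw [Multiset.card_pos_iff_exists_mem] at hpos
  obtain ⟨r, hr⟩ := hpos
  rw [Multiset.mem_filter] at hr
  exact dvd_trans (Dvd.dvd.neg_right hr.2) (Multiset.dvd_prod (Multiset.mem_map_of_mem _ hr.1))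


lemma coprime_of_pairwise_append {lx ly : List ℕ}
    (hp : List.Pairwise Nat.Coprime (lx ++ ly)) :
    ∀ i j : Fin lx.length ⊕ Fin ly.length, i ≠ j →
      Nat.Coprime (Sum.elim lx.get ly.get i) (Sum.elim lx.get ly.get j) := by
  set L := lx ++ ly with hL
  have hlen : L.length = lx.length + ly.length := List.length_append
  set F : Fin lx.length ⊕ Fin ly.length → Fin L.length :=
    fun i => Fin.cast hlen.symm (finSumFinEquiv i) with hF
  have hval : ∀ i, Sum.elim lx.get ly.get i = L.get (F i) := by
    rintro (a | b)
    · have hv : (Fin.cast hlen.symm (finSumFinEquiv (Sum.inl a))).val = a.val := by simp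
      simp only [Sum.elim_inl, hF, hL]
      rw [List.get_eq_getElem, List.get_eq_getElem]
      rw [List.getElem_append_left (by rw [hv]; exact a.isLt)]
      simp only [hv]
    · have hv : (Fin.cast hlen.symm (finSumFinEquiv (Sum.inr b))).val
          = lx.length + b.val := by simp
      simp only [Sum.elim_inr, hF, hL]
      rw [List.get_eq_getElem, List.get_eq_getElem]
      rw [List.getElem_append_right (by rw [hv]; omega)]
      congr 1
      rw [hv]; omega
  have hinj : Function.Injective F := fun i j hij => by
    apply finSumFinEquiv.injective
    exact Fin.cast_injective _ hij
  intro i j hij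
  rw [hval i, hval j]
  have hne : F i ≠ F j := fun hh => hij (hinj hh)
  have hpg := List.pairwise_iff_get.mp hp
  rcases lt_trichotomy (F i) (F j) with h | h | h
  · exact hpg _ _ h
  · exact absurd (Fin.ext (by exact_mod_cast congrArg Fin.val h)) hne
  · exact (hpg _ _ h).symm


lemma pairwise_of_pair {L : List ℕ}
    (h : ∀ a b, ({a, b} : Multiset ℕ) ≤ (L : Multiset ℕ) → Nat.Coprime a b) :
    List.Pairwise Nat.Coprime L := by
  rw [List.pairwise_iff_forall_sublist]
  intro a b hsub
  apply h
  have h1 : ([a, b] : Multiset ℕ) ≤ (L : Multiset ℕ) := Multiset.coe_le.mpr hsub.subperm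
  convert h1 using 1
  rfl

lemma toList_map_sum {β : Type*} [AddCommMonoid β] (ms : Multiset ℕ) (f : ℕ → β) :
    (ms.toList.map f).sum = (ms.map f).sum := by
  conv_rhs => rw [← Multiset.coe_toList ms]
  rw [Multiset.map_coe, Multiset.sum_coe]

lemma toList_map_prod {β : Type*} [CommMonoid β] (ms : Multiset ℕ) (f : ℕ → β) :
    (ms.toList.map f).prod = (ms.map f).prod := by
  conv_rhs => rw [← Multiset.coe_toList ms]
  rw [Multiset.map_coe, Multiset.prod_coe]

theorem stmt_15 (n k c : ℕ) (hn : 2 ≤ n) (hc : 0 < c)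
    (p : Polynomial ℤ)
    (hmonic : p.Monic) (hdeg : p.natDegree = n)
    (hcoeff : p.coeff (n - 1) = 0)
    (hne : p.coeff 1 * p.coeff 0 ≠ 0)
    (hcop : Int.gcd (p.coeff 1) (p.coeff 0) = 1)
    (hconst : p.coeff 0 = (c : ℤ) ^ k ∨ p.coeff 0 = -((c : ℤ) ^ k))
    (hsplit : Polynomial.Splits (p.map (Int.castRingHom ℚ))) :
    ∃ (h l : ℕ) (x : Fin h → ℕ) (y : Fin l → ℕ),
      h + l = n ∧
      (∀ i, 0 < x i) ∧ (∀ j, 0 < y j) ∧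
      (∀ i j : Fin h ⊕ Fin l, i ≠ j →
        Nat.Coprime (Sum.elim x y i) (Sum.elim x y j)) ∧
      (∑ i, (x i) ^ k) = (∑ j, (y j) ^ k) ∧
      p = (∏ i, (X - C ((x i : ℤ) ^ k))) * ∏ j, (X + C ((y j : ℤ) ^ k)) := by
  classical
  obtain ⟨s, hps⟩ := exists_int_roots p hmonic hsplit
  have hcard : Multiset.card s = n := by
    rw [← hdeg, hps, Polynomial.natDegree_multiset_prod_X_sub_C_eq_card]
  have hn2 : 2 ≤ Multiset.card s := by omega
  have hc0 : p.coeff 0 = (s.map fun r => -r).prod := by rw [hps, my_coeff_zero]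
  have hc1 : p.coeff 1 = (-1) ^ (Multiset.card s - 1) * s.esymm (Multiset.card s - 1) := by
    rw [hps, my_coeff_one s hn2]
  have hc0ne : p.coeff 0 ≠ 0 := fun hh => hne (by rw [hh, mul_zero])
  have hsum0 : s.sum = 0 := by
    have h := my_coeff_sub_one s hn2
    rw [← hps, hcard, hcoeff] at h
    omega
  -- key pairwise divisibility bound
  have hkey : ∀ q : ℕ, q.Prime → Multiset.card (s.filter (fun r => (q : ℤ) ∣ r)) ≤ 1 := by
    intro q hq
    by_contra hgt
    push_neg at hgt
    have hd0 : (q : ℤ) ∣ p.coeff 0 := hc0 ▸ dvd_prod_of_two q s hgt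
    have hd1 : (q : ℤ) ∣ p.coeff 1 := by
      rw [hc1]
      exact Dvd.dvd.mul_left (dvd_esymm_of_two q s hgt) _
    have hdg : (q : ℤ) ∣ ((Int.gcd (p.coeff 1) (p.coeff 0) : ℕ) : ℤ) := Int.dvd_coe_gcd hd1 hd0
    rw [hcop] at hdg
    have : q ∣ 1 := by exact_mod_cast hdg
    exact hq.one_lt.ne' (Nat.dvd_one.mp this)
  -- roots are nonzero
  have hrne : ∀ r ∈ s, r ≠ 0 := by
    intro r hr hr0
    apply hc0ne
    rw [hc0]
    apply Multiset.prod_eq_zero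
    have h0 : (0 : ℤ) ∈ s := hr0 ▸ hr
    simpa using Multiset.mem_map_of_mem (fun r => -r) h0
  -- absolute values
  set m : Multiset ℕ := s.map Int.natAbs with hm
  have hposm : ∀ a ∈ m, 0 < a := by
    intro a ha
    obtain ⟨r, hr, rfl⟩ := Multiset.mem_map.mp ha
    exact Int.natAbs_pos.mpr (hrne r hr)
  have hpairm : ∀ a b, ({a, b} : Multiset ℕ) ≤ m → Nat.Coprime a b := by
    intro a b hab
    by_contra hnc
    obtain ⟨q, hqp, hqd⟩ := Nat.exists_prime_and_dvd hnc
    obtain ⟨a', b', ha', hb', hab'⟩ := pair_le_map hab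
    have hda : (q : ℤ) ∣ a' := by
      rw [← Int.dvd_natAbs]
      have hq1 : q ∣ a'.natAbs := by rw [ha']; exact hqd.trans (Nat.gcd_dvd_left a b)
      exact_mod_cast hq1
    have hdb : (q : ℤ) ∣ b' := by
      rw [← Int.dvd_natAbs]
      have hq1 : q ∣ b'.natAbs := by rw [hb']; exact hqd.trans (Nat.gcd_dvd_right a b)
      exact_mod_cast hq1
    have hfil : ({a', b'} : Multiset ℤ).filter (fun r => (q : ℤ) ∣ r) = {a', b'} := by
      rw [Multiset.filter_eq_self]
      intro r hr
      rcases Multiset.mem_cons.mp hr with h1 | h1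
      · rw [h1]; exact hda
      · rw [Multiset.mem_singleton.mp h1]; exact hdb
    have h2 : 2 ≤ Multiset.card (s.filter (fun r => (q : ℤ) ∣ r)) := by
      have hle := Multiset.card_le_card (Multiset.filter_le_filter (fun r => (q : ℤ) ∣ r) hab')
      rw [hfil] at hle
      simpa using hle
    exact absurd (hkey q hqp) (by omega)
  have hprodm : m.prod = c ^ k := by
    have h2 : ∀ (t : Multiset ℤ), (t.prod).natAbs = (t.map Int.natAbs).prod := by
      intro t
      induction t using Multiset.induction with
      | empty => simp
      | cons a t ih => simp [Int.natAbs_mul, ih]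
    have h1 : ((s.map fun r => -r).prod).natAbs = m.prod := by
      rw [h2, hm, Multiset.map_map]
      congr 1
      exact Multiset.map_congr rfl (fun r _ => Int.natAbs_neg r)
    rw [← h1, ← hc0]
    rcases hconst with h | h <;> rw [h] <;> simp [Int.natAbs_pow]
  -- the k-th root function
  have hex : ∀ a ∈ m, ∃ d, a = d ^ k := exists_pow_eq hpairm hprodm
  set g : ℕ → ℕ := fun a => if k = 0 then 1 else if h : ∃ d, a = d ^ k then h.choose else 1
    with hg
  have hgspec : ∀ a ∈ m, g a ^ k = a ∧ 0 < g a := by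
    intro a ha
    by_cases hk : k = 0
    · have ha1 : a = 1 := by
        have hd : a ∣ m.prod := Multiset.dvd_prod ha
        rw [hprodm, hk, pow_zero] at hd
        exact Nat.dvd_one.mp hd
      simp [hg, ha1, hk]
    · have he : ∃ d, a = d ^ k := hex a ha
      have hga : g a = he.choose := by rw [hg]; simp only [hk, if_false]; rw [dif_pos he]
      have hspec := he.choose_spec
      constructor
      · rw [hga]; exact hspec.symm
      · rw [hga]
        rcases Nat.eq_zero_or_pos he.choose with h0 | h0
        · exfalso
          rw [h0, zero_pow hk] at hspec
          exact absurd hspec (by have := hposm a ha; omega)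
        · exact h0
  have hgcop : ∀ a b, ({a, b} : Multiset ℕ) ≤ m → Nat.Coprime (g a) (g b) := by
    intro a b hab
    by_cases hk : k = 0
    · simp [hg, hk]
    · have ha : a ∈ m := Multiset.mem_of_le hab (by simp)
      have hb : b ∈ m := Multiset.mem_of_le hab (by simp)
      have hpk : Nat.Coprime (g a ^ k) (g b ^ k) := by
        rw [(hgspec a ha).1, (hgspec b hb).1]; exact hpairm a b hab
      have hk' : 0 < k := Nat.pos_of_ne_zero hk
      exact (Nat.coprime_pow_left_iff hk' _ _).mp
        ((Nat.coprime_pow_right_iff hk' _ _).mp hpk)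
  -- split into positive and negative roots
  set sp := s.filter (fun r => 0 < r) with hsp
  set sn := s.filter (fun r => ¬ 0 < r) with hsn2
  have hsplit2 : sp + sn = s := Multiset.filter_add_not _ s
  have hspmem : ∀ r ∈ sp, 0 < r := fun r hr => (Multiset.mem_filter.mp hr).2
  have hsnmem : ∀ r ∈ sn, r < 0 := by
    intro r hr
    have h1 := (Multiset.mem_filter.mp hr).2
    have h2 := hrne r (Multiset.mem_of_le (Multiset.filter_le _ _) hr)
    omega
  set mp := sp.map Int.natAbs with hmp
  set mn := sn.map Int.natAbs with hmn
  have hmsplit : mp + mn = m := by rw [hmp, hmn, hm, ← hsplit2, Multiset.map_add]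
  have hmpm : mp ≤ m := hmsplit ▸ Multiset.le_add_right _ _
  have hmnm : mn ≤ m := hmsplit ▸ Multiset.le_add_left _ _
  -- sums
  have hsumZ : sp.sum + sn.sum = 0 := by rw [← Multiset.sum_add, hsplit2]; exact hsum0
  have hmpsum : (mp.sum : ℤ) = sp.sum := by
    rw [Nat.cast_multiset_sum, hmp, Multiset.map_map]
    have hmc : Multiset.map ((fun (a : ℕ) => (a : ℤ)) ∘ Int.natAbs) sp
        = Multiset.map (fun r => r) sp :=
      Multiset.map_congr rfl (fun r hr => Int.natAbs_of_nonneg (le_of_lt (hspmem r hr)))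
    rw [hmc, Multiset.map_id']
  have hmnsum : (mn.sum : ℤ) = -sn.sum := by
    rw [Nat.cast_multiset_sum, hmn, Multiset.map_map]
    have hmc : Multiset.map ((fun (a : ℕ) => (a : ℤ)) ∘ Int.natAbs) sn
        = Multiset.map (fun r => -r) sn :=
      Multiset.map_congr rfl (fun r hr => Int.ofNat_natAbs_of_nonpos (le_of_lt (hsnmem r hr)))
    rw [hmc, Multiset.sum_map_neg']
  have hnat_eq : mp.sum = mn.sum := by
    have hZ : (mp.sum : ℤ) = (mn.sum : ℤ) := by rw [hmpsum, hmnsum]; omega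
    exact_mod_cast hZ
  -- the witnesses
  set xs := mp.map g with hxs
  set ys := mn.map g with hys
  have hxsk : xs.map (fun d => d ^ k) = mp := by
    rw [hxs, Multiset.map_map]
    have h1 : Multiset.map ((fun d => d ^ k) ∘ g) mp = Multiset.map (fun a => a) mp :=
      Multiset.map_congr rfl (fun a ha => (hgspec a (Multiset.mem_of_le hmpm ha)).1)
    rw [h1, Multiset.map_id']
  have hysk : ys.map (fun d => d ^ k) = mn := by
    rw [hys, Multiset.map_map]
    have h1 : Multiset.map ((fun d => d ^ k) ∘ g) mn = Multiset.map (fun a => a) mn :=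
      Multiset.map_congr rfl (fun a ha => (hgspec a (Multiset.mem_of_le hmnm ha)).1)
    rw [h1, Multiset.map_id']
  set lx := xs.toList with hlx
  set ly := ys.toList with hly
  refine ⟨lx.length, ly.length, lx.get, ly.get, ?_, ?_, ?_, ?_, ?_, ?_⟩
  · have e1 : lx.length = Multiset.card mp := by
      rw [hlx, Multiset.length_toList, hxs, Multiset.card_map]
    have e2 : ly.length = Multiset.card mn := by
      rw [hly, Multiset.length_toList, hys, Multiset.card_map]
    have e3 : Multiset.card mp + Multiset.card mn = Multiset.card m := by
      rw [← Multiset.card_add, hmsplit]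
    have e4 : Multiset.card m = n := by rw [hm, Multiset.card_map, hcard]
    omega
  · intro i
    have hmem : lx.get i ∈ xs := Multiset.mem_toList.mp (List.get_mem _ _)
    obtain ⟨a, ha, hga⟩ := Multiset.mem_map.mp (hxs ▸ hmem)
    rw [← hga]
    exact (hgspec a (Multiset.mem_of_le hmpm ha)).2
  · intro j
    have hmem : ly.get j ∈ ys := Multiset.mem_toList.mp (List.get_mem _ _)
    obtain ⟨a, ha, hga⟩ := Multiset.mem_map.mp (hys ▸ hmem)
    rw [← hga]
    exact (hgspec a (Multiset.mem_of_le hmnm ha)).2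
  · apply coprime_of_pairwise_append
    apply pairwise_of_pair
    intro a b hab
    have hcoe : ((lx ++ ly : List ℕ) : Multiset ℕ) = m.map g := by
      rw [← Multiset.coe_add, hlx, hly, Multiset.coe_toList, Multiset.coe_toList,
        hxs, hys, ← Multiset.map_add, hmsplit]
    rw [hcoe] at hab
    obtain ⟨a', b', ha', hb', hab'⟩ := pair_le_map hab
    rw [← ha', ← hb']
    exact hgcop a' b' hab'
  · have h1 : ∑ i : Fin lx.length, lx.get i ^ k = mp.sum := by
      have hsg : ∑ i : Fin lx.length, lx.get i ^ k = (lx.map (fun d => d ^ k)).sum := by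
        simp only [List.get_eq_getElem]
        exact Fin.sum_univ_fun_getElem lx (fun d => d ^ k)
      rw [hsg, hlx, toList_map_sum, hxsk]
    have h2 : ∑ j : Fin ly.length, ly.get j ^ k = mn.sum := by
      have hsg : ∑ j : Fin ly.length, ly.get j ^ k = (ly.map (fun d => d ^ k)).sum := by
        simp only [List.get_eq_getElem]
        exact Fin.sum_univ_fun_getElem ly (fun d => d ^ k)
      rw [hsg, hly, toList_map_sum, hysk]
    rw [h1, h2, hnat_eq]
  · have h1 : (∏ i : Fin lx.length, (X - C ((lx.get i : ℤ) ^ k)))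
        = (sp.map (fun r => X - C r)).prod := by
      have hpg : (∏ i : Fin lx.length, (X - C ((lx.get i : ℤ) ^ k)))
          = (lx.map (fun d : ℕ => X - C ((d : ℤ) ^ k))).prod := by
        simp only [List.get_eq_getElem]
        exact Fin.prod_univ_fun_getElem lx (fun d : ℕ => X - C ((d : ℤ) ^ k))
      rw [hpg, hlx, toList_map_prod, hxs, Multiset.map_map, hmp, Multiset.map_map]
      refine congrArg Multiset.prod (Multiset.map_congr rfl ?_)
      intro r hr
      have hrm : (r.natAbs : ℕ) ∈ m := by
        rw [hm]; exact Multiset.mem_map_of_mem _ (Multiset.mem_of_le (Multiset.filter_le _ _) hr)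
      have hgk : g r.natAbs ^ k = r.natAbs := (hgspec _ hrm).1
      simp only [Function.comp_apply]
      congr 1
      rw [show ((g r.natAbs : ℤ)) ^ k = ((g r.natAbs ^ k : ℕ) : ℤ) by push_cast; ring, hgk]
      exact congrArg C (Int.natAbs_of_nonneg (le_of_lt (hspmem r hr)))
    have h2 : (∏ j : Fin ly.length, (X + C ((ly.get j : ℤ) ^ k)))
        = (sn.map (fun r => X - C r)).prod := by
      have hpg : (∏ j : Fin ly.length, (X + C ((ly.get j : ℤ) ^ k)))
          = (ly.map (fun d : ℕ => X + C ((d : ℤ) ^ k))).prod := by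
        simp only [List.get_eq_getElem]
        exact Fin.prod_univ_fun_getElem ly (fun d : ℕ => X + C ((d : ℤ) ^ k))
      rw [hpg, hly, toList_map_prod, hys, Multiset.map_map, hmn, Multiset.map_map]
      refine congrArg Multiset.prod (Multiset.map_congr rfl ?_)
      intro r hr
      have hrm : (r.natAbs : ℕ) ∈ m := by
        rw [hm]; exact Multiset.mem_map_of_mem _ (Multiset.mem_of_le (Multiset.filter_le _ _) hr)
      have hgk : g r.natAbs ^ k = r.natAbs := (hgspec _ hrm).1
      simp only [Function.comp_apply]
      rw [show ((g r.natAbs : ℤ)) ^ k = ((g r.natAbs ^ k : ℕ) : ℤ) by push_cast; ring, hgk]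
      rw [Int.ofNat_natAbs_of_nonpos (le_of_lt (hsnmem r hr))]
      rw [map_neg, ← sub_eq_add_neg]
    rw [h1, h2, ← Multiset.prod_add, ← Multiset.map_add, hsplit2, ← hps]
end
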